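/- arXiv:0905.1825 — 4 statements merged into one kernel-verified Lean document; each statement's English description precedes it below -/
import Mathlib

section
/- For every initial datum η ∈ H₊ and every control c ∈ L¹_loc([0,∞);ℝ₊), the delay state equation admits a unique solution x(·;η,c) : [-T,∞) → ℝ, and this solution is absolutely continuous on [0,∞). -/
open MeasureTheory Real Set Filter Topology

noncomputable section

/-- Lebesgue measure restricted to the interval `[-T,0]`. -/
def μT (T : ℝ) : Measure ℝ := volume.restrict (Icc (-T) 0)

/-- The space `H = ℝ × L²([-T,0];ℝ)`. -/
abbrev Hsp (T : ℝ) := ℝ × Lp ℝ 2 (μT T)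
/-- Hypotheses on the delay kernel `a`: it belongs to `W^{1,2}([-T,0];ℝ)`
(it has an a.e. derivative `a'` in `L²`), is nonnegative, and vanishes at `-T`. -/
structure AHyp (T : ℝ) (a : ℝ → ℝ) : Prop where
  mem : MemLp a 2 (μT T)
  w12 : ∃ a' : ℝ → ℝ, MemLp a' 2 (μT T) ∧
    ∀ s ∈ Icc (-T) (0:ℝ), a s = a (-T) + ∫ ξ in (-T)..s, a' ξ
  nonneg : ∀ s ∈ Icc (-T) (0:ℝ), 0 ≤ a s
  zeroT : a (-T) = 0

/-- Hypotheses on `f₀`: jointly concave, nondecreasing in the second variable,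
Lipschitz continuous with constant `Cf`, positive at `(0,y)` for `y > 0`, and
extended by `f₀(x,y) = f₀(0,y)` for `x < 0`. -/
structure FHyp (Cf : ℝ) (f₀ : ℝ × ℝ → ℝ) : Prop where
  conc : ConcaveOn ℝ univ f₀
  mono : ∀ x : ℝ, Monotone fun y => f₀ (x, y)
  lip : LipschitzWith (Real.toNNReal Cf) f₀
  pos : ∀ y : ℝ, 0 < y → 0 < f₀ (0, y)
  extneg : ∀ x : ℝ, x < 0 → ∀ y : ℝ, f₀ (x, y) = f₀ (0, y)
/-- A control: a locally integrable, a.e. nonnegative function on `[0,∞)`. -/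
def IsControl (c : ℝ → ℝ) : Prop :=
  (∀ᵐ t ∂(volume.restrict (Ici (0:ℝ))), 0 ≤ c t) ∧ LocallyIntegrableOn c (Ici 0)

/-- `x : ℝ → ℝ` solves the delay state equation with initial datum `(η₀, η₁)`
and control `c`: `x = η₁` a.e. on `[-T,0)` and for all `t ≥ 0`,
`x(t) = η₀ + ∫₀ᵗ [r x(s) + f₀(x(s), ∫_{-T}^0 a(ξ)x(s+ξ)dξ) - c(s)] ds`. -/
def IsSol (T r : ℝ) (a : ℝ → ℝ) (f₀ : ℝ × ℝ → ℝ) (η₀ : ℝ) (η₁ : Lp ℝ 2 (μT T))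
    (c : ℝ → ℝ) (x : ℝ → ℝ) : Prop :=
  (∀ᵐ s ∂(volume.restrict (Ico (-T) (0:ℝ))), x s = η₁ s) ∧
  ∀ t : ℝ, 0 ≤ t → x t = η₀ + ∫ s in (0:ℝ)..t,
      (r * x s + f₀ (x s, ∫ ξ in (-T)..(0:ℝ), a ξ * x (s + ξ)) - c s)
/-- `x` is absolutely continuous on `[0,∞)`: it is the primitive of a locally
integrable function there. -/
def IsACOn (x : ℝ → ℝ) : Prop :=
  ∃ g : ℝ → ℝ, LocallyIntegrableOn g (Ici 0) ∧
    ∀ t : ℝ, 0 ≤ t → x t = x 0 + ∫ s in (0:ℝ)..t, g s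



open Nat

namespace DelayAux

structure Stp where
  T : ℝ
  r : ℝ
  η₀ : ℝ
  Ca : ℝ
  Cf : ℝ
  Bh : ℝ
  a : ℝ → ℝ
  h : ℝ → ℝ
  c : ℝ → ℝ
  f₀ : ℝ × ℝ → ℝ
  hT : 0 < T
  hCa0 : 0 ≤ Ca
  hCa : ∀ ξ ∈ Icc (-T) (0:ℝ), |a ξ| ≤ Ca
  haM : AEStronglyMeasurable a (volume.restrict (Ioc (-T) 0))
  hhm : Measurable h
  hhi : Integrable h volume
  hBh : (∫ s, |h s|) ≤ Bh
  hCf0 : 0 ≤ Cf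
  hlip : ∀ p q : ℝ × ℝ, |f₀ p - f₀ q| ≤ Cf * max |p.1 - q.1| |p.2 - q.2|
  hf₀c : Continuous f₀
  hci : ∀ b : ℝ, IntegrableOn c (Icc 0 b) volume

/-- `u` bounded on the nonnegative axis -/
def Bdd (u : ℝ → ℝ) (M : ℝ) : Prop := ∀ τ : ℝ, 0 ≤ τ → |u τ| ≤ M

lemma div_le_div_of_nonneg_right' {a b c : ℝ} (h : a ≤ b) (hc : 0 < c) :
    a / c ≤ b / c := by gcongr

lemma Bdd.M0 {u : ℝ → ℝ} {M : ℝ} (hM : Bdd u M) : 0 ≤ M :=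
  (abs_nonneg _).trans (hM 0 le_rfl)

namespace Stp

variable (S : Stp)

/-- extension of `u` by the history `h` on negatives -/
def Ext (u : ℝ → ℝ) : ℝ → ℝ := fun t => if t < 0 then S.h t else u t

/-- delay term -/
def Dop (u : ℝ → ℝ) (s : ℝ) : ℝ := ∫ ξ in Ioc (-S.T) 0, S.a ξ * S.Ext u (s + ξ)

/-- right-hand side -/
def Fop (u : ℝ → ℝ) (s : ℝ) : ℝ := S.r * u s + S.f₀ (u s, S.Dop u s) - S.c s

/-- Lipschitz constant -/
def K : ℝ := |S.r| + S.Cf * (1 + S.Ca * S.T)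

lemma K_nonneg : 0 ≤ S.K := by
  have h1 : 0 ≤ S.Ca * S.T := mul_nonneg S.hCa0 S.hT.le
  have := S.hCf0
  have := abs_nonneg S.r
  unfold K; nlinarith

lemma ext_bound {u : ℝ → ℝ} {M : ℝ} (hM : Bdd u M) (t : ℝ) :
    |S.Ext u t| ≤ |S.h t| + M := by
  unfold Ext
  split
  · linarith [hM.M0]
  · have := hM t (not_lt.1 (by assumption))
    linarith [abs_nonneg (S.h t)]

lemma ext_meas {u : ℝ → ℝ} (hu : Measurable u) : Measurable (S.Ext u) :=
  Measurable.ite measurableSet_Iio S.hhm hu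

lemma intD {u : ℝ → ℝ} {M : ℝ} (hu : Measurable u) (hM : Bdd u M) (s : ℝ) :
    IntegrableOn (fun ξ => S.a ξ * S.Ext u (s + ξ)) (Ioc (-S.T) 0) volume := by
  have hmeas : AEStronglyMeasurable (fun ξ => S.a ξ * S.Ext u (s + ξ))
      (volume.restrict (Ioc (-S.T) 0)) :=
    S.haM.mul (((S.ext_meas hu).comp (measurable_const.add measurable_id)).aestronglyMeasurable)
  have hint : Integrable (fun ξ => S.Ca * (|S.h (s + ξ)| + M))
      (volume.restrict (Ioc (-S.T) 0)) := by
    refine Integrable.const_mul ?_ _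
    exact ((S.hhi.comp_add_left s).abs.integrableOn).add
      (integrableOn_const measure_Ioc_lt_top.ne)
  refine Integrable.mono' hint hmeas ?_
  refine ae_restrict_of_forall_mem measurableSet_Ioc ?_
  intro ξ hξ
  have h1 : |S.a ξ| ≤ S.Ca := S.hCa ξ (Ioc_subset_Icc_self hξ)
  have h2 := S.ext_bound hM (s + ξ)
  calc ‖S.a ξ * S.Ext u (s + ξ)‖ = |S.a ξ| * |S.Ext u (s + ξ)| := by
        rw [Real.norm_eq_abs, abs_mul]
    _ ≤ S.Ca * (|S.h (s + ξ)| + M) :=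
        mul_le_mul h1 h2 (abs_nonneg _) S.hCa0

lemma D_bnd {u : ℝ → ℝ} {M : ℝ} (hu : Measurable u) (hM : Bdd u M) (s : ℝ) :
    |S.Dop u s| ≤ S.Ca * S.Bh + S.Ca * M * S.T := by
  have htrans : Integrable (fun ξ => |S.h (s + ξ)|) volume := (S.hhi.comp_add_left s).abs
  have hint : Integrable (fun ξ => S.Ca * (|S.h (s + ξ)| + M))
      (volume.restrict (Ioc (-S.T) 0)) := by
    refine Integrable.const_mul ?_ _
    exact (htrans.integrableOn).add (integrableOn_const measure_Ioc_lt_top.ne)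
  have h1 : |S.Dop u s| ≤ ∫ ξ in Ioc (-S.T) 0, S.Ca * (|S.h (s + ξ)| + M) := by
    refine le_trans ?_ (integral_mono_ae (S.intD hu hM s).norm hint ?_)
    · rw [← Real.norm_eq_abs]
      exact norm_integral_le_integral_norm _
    · refine ae_restrict_of_forall_mem measurableSet_Ioc ?_
      intro ξ hξ
      have h1 : |S.a ξ| ≤ S.Ca := S.hCa ξ (Ioc_subset_Icc_self hξ)
      have h2 := S.ext_bound hM (s + ξ)
      calc ‖S.a ξ * S.Ext u (s + ξ)‖ = |S.a ξ| * |S.Ext u (s + ξ)| := by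
            rw [Real.norm_eq_abs, abs_mul]
        _ ≤ S.Ca * (|S.h (s + ξ)| + M) := mul_le_mul h1 h2 (abs_nonneg _) S.hCa0
  have h2 : ∫ ξ in Ioc (-S.T) 0, S.Ca * (|S.h (s + ξ)| + M)
      = S.Ca * ((∫ ξ in Ioc (-S.T) 0, |S.h (s + ξ)|) + M * S.T) := by
    rw [integral_const_mul]
    congr 1
    rw [integral_add htrans.integrableOn (integrableOn_const measure_Ioc_lt_top.ne)]
    congr 1
    rw [setIntegral_const, Measure.real, Real.volume_Ioc, smul_eq_mul]
    rw [show (0:ℝ) - (-S.T) = S.T by ring, ENNReal.toReal_ofReal S.hT.le]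
    ring
  have h3 : (∫ ξ in Ioc (-S.T) 0, |S.h (s + ξ)|) ≤ S.Bh := by
    refine le_trans (setIntegral_le_integral htrans (ae_of_all _ fun ξ => abs_nonneg _)) ?_
    calc (∫ ξ, |S.h (s + ξ)|) = ∫ t, |S.h t| := integral_add_left_eq_self (μ := volume) (fun t => |S.h t|) s
      _ ≤ S.Bh := S.hBh
  have hM0 : 0 ≤ M := hM.M0
  calc |S.Dop u s| ≤ S.Ca * ((∫ ξ in Ioc (-S.T) 0, |S.h (s + ξ)|) + M * S.T) := h2 ▸ h1
    _ ≤ S.Ca * (S.Bh + M * S.T) := by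
        refine mul_le_mul_of_nonneg_left (by linarith) S.hCa0
    _ = S.Ca * S.Bh + S.Ca * M * S.T := by ring

lemma D_diff {u v : ℝ → ℝ} {Mu Mv d : ℝ} (hu : Measurable u) (hv : Measurable v)
    (hMu : Bdd u Mu) (hMv : Bdd v Mv) (hd : 0 ≤ d) {s : ℝ}
    (hle : ∀ τ ∈ Icc (0:ℝ) s, |u τ - v τ| ≤ d) :
    |S.Dop u s - S.Dop v s| ≤ S.Ca * d * S.T := by
  rw [Dop, Dop, ← integral_sub (S.intD hu hMu s) (S.intD hv hMv s)]
  have hb : ∀ ξ ∈ Ioc (-S.T) 0,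
      ‖S.a ξ * S.Ext u (s + ξ) - S.a ξ * S.Ext v (s + ξ)‖ ≤ S.Ca * d := by
    intro ξ hξ
    rw [← mul_sub, Real.norm_eq_abs, abs_mul]
    have hE : |S.Ext u (s + ξ) - S.Ext v (s + ξ)| ≤ d := by
      unfold Ext
      split
      · simpa using hd
      · exact hle (s + ξ) ⟨not_lt.1 (by assumption), by linarith [hξ.2]⟩
    exact mul_le_mul (S.hCa ξ (Ioc_subset_Icc_self hξ)) hE (abs_nonneg _) S.hCa0
  calc ‖∫ ξ in Ioc (-S.T) 0, (S.a ξ * S.Ext u (s + ξ) - S.a ξ * S.Ext v (s + ξ))‖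
      ≤ S.Ca * d * (volume (Ioc (-S.T) 0)).toReal :=
        norm_setIntegral_le_of_norm_le_const measure_Ioc_lt_top hb
    _ = S.Ca * d * S.T := by
        rw [Real.volume_Ioc, show (0:ℝ) - (-S.T) = S.T by ring, ENNReal.toReal_ofReal S.hT.le]

lemma F_diff {u v : ℝ → ℝ} {Mu Mv d : ℝ} (hu : Measurable u) (hv : Measurable v)
    (hMu : Bdd u Mu) (hMv : Bdd v Mv) {s : ℝ} (hs : 0 ≤ s) (hd : 0 ≤ d)
    (hle : ∀ τ ∈ Icc (0:ℝ) s, |u τ - v τ| ≤ d) :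
    |S.Fop u s - S.Fop v s| ≤ S.K * d := by
  have h1 : |u s - v s| ≤ d := hle s ⟨hs, le_rfl⟩
  have h2 := S.D_diff hu hv hMu hMv hd hle
  have h3 := S.hlip (u s, S.Dop u s) (v s, S.Dop v s)
  simp only at h3
  have h4 : max |u s - v s| |S.Dop u s - S.Dop v s| ≤ d + S.Ca * d * S.T := by
    have hx : 0 ≤ S.Ca * d * S.T := mul_nonneg (mul_nonneg S.hCa0 hd) S.hT.le
    exact max_le (by linarith) (by linarith)
  have heq : S.Fop u s - S.Fop v s
      = S.r * (u s - v s) + (S.f₀ (u s, S.Dop u s) - S.f₀ (v s, S.Dop v s)) := by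
    unfold Fop; ring
  calc |S.Fop u s - S.Fop v s|
      ≤ |S.r * (u s - v s)| + |S.f₀ (u s, S.Dop u s) - S.f₀ (v s, S.Dop v s)| := by
        rw [heq]; exact abs_add_le _ _
    _ ≤ |S.r| * d + S.Cf * (d + S.Ca * d * S.T) := by
        refine add_le_add ?_ (le_trans h3 (mul_le_mul_of_nonneg_left h4 S.hCf0))
        rw [abs_mul]
        exact mul_le_mul_of_nonneg_left h1 (abs_nonneg _)
    _ = S.K * d := by unfold K; ring

lemma D_meas {u : ℝ → ℝ} (hu : Measurable u) : Measurable (S.Dop u) := by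
  set am := S.haM.mk S.a with ham
  have hameq := S.haM.ae_eq_mk
  have key : S.Dop u = fun s => ∫ ξ in Ioc (-S.T) 0, am ξ * S.Ext u (s + ξ) := by
    funext s
    exact integral_congr_ae (hameq.mul (Filter.EventuallyEq.refl _ _))
  rw [key]
  have hsm : StronglyMeasurable fun p : ℝ × ℝ => am p.2 * S.Ext u (p.1 + p.2) := by
    refine Measurable.stronglyMeasurable ?_
    exact (S.haM.stronglyMeasurable_mk.measurable.comp measurable_snd).mul
      ((S.ext_meas hu).comp (measurable_fst.add measurable_snd))
  exact hsm.integral_prod_right'.measurable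

lemma F_int {u : ℝ → ℝ} {M : ℝ} (hu : Measurable u) (hM : Bdd u M) (b : ℝ) :
    IntegrableOn (S.Fop u) (Icc 0 b) volume := by
  have hmeas : AEStronglyMeasurable (fun s => S.r * u s + S.f₀ (u s, S.Dop u s))
      (volume.restrict (Icc 0 b)) := by
    refine Measurable.aestronglyMeasurable ?_
    exact (measurable_const.mul hu).add
      (S.hf₀c.measurable.comp (hu.prodMk (S.D_meas hu)))
  set C₀ := |S.r| * M + (|S.f₀ (0, 0)| + S.Cf * max M (S.Ca * S.Bh + S.Ca * M * S.T)) with hC₀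
  have hbd : ∀ s ∈ Icc (0:ℝ) b, ‖S.r * u s + S.f₀ (u s, S.Dop u s)‖ ≤ C₀ := by
    intro s hs
    have h1 : |u s| ≤ M := hM s hs.1
    have h2 := S.D_bnd hu hM s
    have h3 := S.hlip (u s, S.Dop u s) (0, 0)
    simp only [sub_zero] at h3
    have h4 : |S.f₀ (u s, S.Dop u s)| ≤ |S.f₀ (0, 0)|
        + S.Cf * max M (S.Ca * S.Bh + S.Ca * M * S.T) := by
      have h5 : |S.f₀ (u s, S.Dop u s)| ≤ |S.f₀ (u s, S.Dop u s) - S.f₀ (0, 0)| + |S.f₀ (0,0)| := by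
        have := abs_sub_abs_le_abs_sub (S.f₀ (u s, S.Dop u s)) (S.f₀ (0,0))
        linarith [abs_nonneg (S.f₀ (0,0))]
      refine le_trans h5 ?_
      have h6 : max |u s| |S.Dop u s| ≤ max M (S.Ca * S.Bh + S.Ca * M * S.T) :=
        max_le_max h1 h2
      have := mul_le_mul_of_nonneg_left h6 S.hCf0
      linarith [h3.trans this]
    rw [Real.norm_eq_abs]
    calc |S.r * u s + S.f₀ (u s, S.Dop u s)| ≤ |S.r * u s| + |S.f₀ (u s, S.Dop u s)| := abs_add_le _ _
      _ ≤ C₀ := by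
          rw [abs_mul, hC₀]
          have := mul_le_mul_of_nonneg_left h1 (abs_nonneg S.r)
          linarith
  have h4 : IntegrableOn (fun s => S.r * u s + S.f₀ (u s, S.Dop u s)) (Icc 0 b) volume := by
    refine Integrable.mono'
      (integrableOn_const (C := C₀) measure_Icc_lt_top.ne) hmeas ?_
    exact ae_restrict_of_forall_mem measurableSet_Icc hbd
  exact h4.sub (S.hci b)


lemma keyU {u v : ℝ → ℝ} {Mu Mv : ℝ} (hu : Measurable u) (hv : Measurable v)
    (hMu : Bdd u Mu) (hMv : Bdd v Mv) {b : ℝ} (hb : 0 ≤ b)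
    {D₀ : ℝ} (hD₀ : ∀ t ∈ Icc (0:ℝ) b, |u t - v t| ≤ D₀)
    (hue : ∀ t ∈ Icc (0:ℝ) b, u t = S.η₀ + ∫ s in (0:ℝ)..t, S.Fop u s)
    (hve : ∀ t ∈ Icc (0:ℝ) b, v t = S.η₀ + ∫ s in (0:ℝ)..t, S.Fop v s) :
    ∀ t ∈ Icc (0:ℝ) b, u t = v t := by
  have hD₀0 : 0 ≤ D₀ := (abs_nonneg _).trans (hD₀ 0 ⟨le_rfl, hb⟩)
  have hK := S.K_nonneg
  have hiu := S.F_int hu hMu b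
  have hiv := S.F_int hv hMv b
  have hIu : ∀ t, 0 ≤ t → t ≤ b → IntervalIntegrable (S.Fop u) volume 0 t := by
    intro t h1 h2
    exact (intervalIntegrable_iff_integrableOn_Ioc_of_le h1).2
      (hiu.mono_set (fun z hz => ⟨hz.1.le, hz.2.trans h2⟩))
  have hIv : ∀ t, 0 ≤ t → t ≤ b → IntervalIntegrable (S.Fop v) volume 0 t := by
    intro t h1 h2
    exact (intervalIntegrable_iff_integrableOn_Ioc_of_le h1).2
      (hiv.mono_set (fun z hz => ⟨hz.1.le, hz.2.trans h2⟩))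
  have main : ∀ n : ℕ, ∀ t ∈ Icc (0:ℝ) b, |u t - v t| ≤ D₀ * (S.K ^ n * t ^ n / n !) := by
    intro n
    induction n with
    | zero => intro t ht; simpa using hD₀ t ht
    | succ n ih =>
      intro t ht
      have h0t : (0:ℝ) ≤ t := ht.1
      have heq : u t - v t = ∫ s in (0:ℝ)..t, (S.Fop u s - S.Fop v s) := by
        rw [hue t ht, hve t ht, intervalIntegral.integral_sub (hIu t h0t ht.2) (hIv t h0t ht.2)]
        ring
      rw [heq]
      have step1 : |∫ s in (0:ℝ)..t, (S.Fop u s - S.Fop v s)|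
          ≤ ∫ s in (0:ℝ)..t, |S.Fop u s - S.Fop v s| :=
        intervalIntegral.abs_integral_le_integral_abs h0t
      have step2 : (∫ s in (0:ℝ)..t, |S.Fop u s - S.Fop v s|)
          ≤ ∫ s in (0:ℝ)..t, (D₀ * S.K ^ (n+1) / n !) * s ^ n := by
        refine intervalIntegral.integral_mono_on h0t
          ((hIu t h0t ht.2).sub (hIv t h0t ht.2)).abs
          (((continuous_const.mul (continuous_pow n)).intervalIntegrable _ _)) ?_
        intro s hs
        have hd : 0 ≤ D₀ * (S.K ^ n * s ^ n / n !) :=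
          mul_nonneg hD₀0 (div_nonneg (mul_nonneg (pow_nonneg hK n) (pow_nonneg hs.1 n))
            (Nat.cast_nonneg _))
        have hF := S.F_diff hu hv hMu hMv hs.1 hd (fun τ hτ => by
          refine le_trans (ih τ ⟨hτ.1, hτ.2.trans (hs.2.trans ht.2)⟩) ?_
          have : τ ^ n ≤ s ^ n := pow_le_pow_left₀ hτ.1 hτ.2 n
          have hKn : (0:ℝ) ≤ S.K ^ n := pow_nonneg hK n
          have hfac : (0:ℝ) < (n ! : ℝ) := by exact_mod_cast Nat.factorial_pos n
          refine mul_le_mul_of_nonneg_left ?_ hD₀0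
          exact div_le_div_of_nonneg_right' (mul_le_mul_of_nonneg_left this hKn) hfac)
        refine hF.trans (le_of_eq ?_)
        ring
      have step3 : (∫ s in (0:ℝ)..t, (D₀ * S.K ^ (n+1) / n !) * s ^ n)
          = (D₀ * S.K ^ (n+1) / n !) * (t ^ (n+1) / (n+1)) := by
        rw [intervalIntegral.integral_const_mul, integral_pow]
        norm_num
      have hfac : ((n+1)! : ℝ) = (n+1) * (n ! : ℝ) := by
        rw [Nat.factorial_succ]; push_cast; ring
      have hfacne : (n ! : ℝ) ≠ 0 := by
        exact_mod_cast (Nat.factorial_pos n).ne'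
      have hend : (D₀ * S.K ^ (n+1) / n !) * (t ^ (n+1) / (n+1))
          = D₀ * (S.K ^ (n+1) * t ^ (n+1) / ((n+1)!)) := by
        rw [hfac]
        field_simp
      calc |∫ s in (0:ℝ)..t, (S.Fop u s - S.Fop v s)|
          ≤ ∫ s in (0:ℝ)..t, (D₀ * S.K ^ (n+1) / n !) * s ^ n := step1.trans step2
        _ = D₀ * (S.K ^ (n+1) * t ^ (n+1) / ((n+1)!)) := by rw [step3, hend]
  intro t ht
  have hlim : Tendsto (fun n : ℕ => D₀ * ((S.K * t) ^ n / n !)) atTop (𝓝 0) := by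
    simpa using (FloorSemiring.tendsto_pow_div_factorial_atTop (S.K * t)).const_mul D₀
  have habs : |u t - v t| ≤ 0 := by
    refine ge_of_tendsto hlim (Filter.Eventually.of_forall fun n => ?_)
    rw [mul_pow]
    exact main n t ht
  have := abs_nonpos_iff.1 habs
  linarith [sub_eq_zero.1 this]

lemma exFix (b : ℝ) (hb : 0 ≤ b) :
    ∃ u : ℝ → ℝ, Continuous u ∧ (∃ M, ∀ τ, |u τ| ≤ M) ∧
      ∀ t ∈ Icc (0:ℝ) b, u t = S.η₀ + ∫ s in (0:ℝ)..t, S.Fop u s := by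
  classical
  have hK := S.K_nonneg
  set pb : ℝ → ℝ := fun t => max 0 (min t b) with hpb
  have pbc : Continuous pb := continuous_const.max (continuous_id.min continuous_const)
  have pbm : ∀ t, pb t ∈ Icc (0:ℝ) b := fun t => ⟨le_max_left _ _, max_le hb (min_le_right _ _)⟩
  have pbid : ∀ t ∈ Icc (0:ℝ) b, pb t = t := by
    intro t ht
    simp [hpb, min_eq_left ht.2, max_eq_right ht.1]
  have pble : ∀ t, 0 ≤ t → pb t ≤ t := fun t ht => max_le ht (min_le_left _ _)
  -- the data needed for each u
  have hbdd : ∀ u : BoundedContinuousFunction ℝ ℝ, Bdd ⇑u ‖u‖ :=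
    fun u τ _ => by simpa [Real.norm_eq_abs] using u.norm_coe_le_norm τ
  have hFi : ∀ u : BoundedContinuousFunction ℝ ℝ, IntegrableOn (S.Fop ⇑u) (Icc 0 b) volume :=
    fun u => S.F_int u.continuous.measurable (hbdd u) b
  have hIi : ∀ (u : BoundedContinuousFunction ℝ ℝ) (t : ℝ), 0 ≤ t → t ≤ b →
      IntervalIntegrable (S.Fop ⇑u) volume 0 t := by
    intro u t h1 h2
    exact (intervalIntegrable_iff_integrableOn_Ioc_of_le h1).2
      ((hFi u).mono_set (fun z hz => ⟨hz.1.le, hz.2.trans h2⟩))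
  have hPcont : ∀ u : BoundedContinuousFunction ℝ ℝ,
      ContinuousOn (fun τ => ∫ s in (0:ℝ)..τ, S.Fop ⇑u s) (Icc 0 b) := by
    intro u
    have := intervalIntegral.continuousOn_primitive_interval (a := (0:ℝ)) (b := b)
      (μ := volume) (f := S.Fop ⇑u) (by rw [uIcc_of_le hb]; exact hFi u)
    rwa [uIcc_of_le hb] at this
  have hPbd : ∀ (u : BoundedContinuousFunction ℝ ℝ) (t : ℝ),
      ‖S.η₀ + ∫ s in (0:ℝ)..(pb t), S.Fop ⇑u s‖
        ≤ |S.η₀| + ∫ s in Icc (0:ℝ) b, |S.Fop ⇑u s| := by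
    intro u t
    have h1 : ‖∫ s in (0:ℝ)..(pb t), S.Fop ⇑u s‖ ≤ ∫ s in Ioc (0:ℝ) (pb t), ‖S.Fop ⇑u s‖ := by
      rw [intervalIntegral.integral_of_le (pbm t).1]
      exact norm_integral_le_integral_norm _
    have h2 : (∫ s in Ioc (0:ℝ) (pb t), ‖S.Fop ⇑u s‖) ≤ ∫ s in Icc (0:ℝ) b, ‖S.Fop ⇑u s‖ := by
      refine setIntegral_mono_set (hFi u).norm (ae_of_all _ fun s => norm_nonneg _) ?_
      exact HasSubset.Subset.eventuallyLE (fun z hz => ⟨hz.1.le, hz.2.trans (pbm t).2⟩)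
    calc ‖S.η₀ + ∫ s in (0:ℝ)..(pb t), S.Fop ⇑u s‖
        ≤ ‖S.η₀‖ + ‖∫ s in (0:ℝ)..(pb t), S.Fop ⇑u s‖ := norm_add_le _ _
      _ ≤ |S.η₀| + ∫ s in Icc (0:ℝ) b, |S.Fop ⇑u s| := by
          rw [Real.norm_eq_abs]
          refine add_le_add le_rfl (h1.trans (h2.trans (le_of_eq ?_)))
          simp [Real.norm_eq_abs]
  set Φ : BoundedContinuousFunction ℝ ℝ → BoundedContinuousFunction ℝ ℝ := fun u =>
    BoundedContinuousFunction.ofNormedAddCommGroup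
      (fun t => S.η₀ + ∫ s in (0:ℝ)..(pb t), S.Fop ⇑u s)
      (continuous_const.add ((hPcont u).comp_continuous pbc pbm))
      (|S.η₀| + ∫ s in Icc (0:ℝ) b, |S.Fop ⇑u s|) (hPbd u) with hΦ
  have coeΦ : ∀ (u : BoundedContinuousFunction ℝ ℝ) (t : ℝ),
      (Φ u) t = S.η₀ + ∫ s in (0:ℝ)..(pb t), S.Fop ⇑u s := fun u t => rfl
  -- the iterate estimate
  have claim : ∀ (n : ℕ) (u v : BoundedContinuousFunction ℝ ℝ) (t : ℝ),
      |(Φ^[n] u) t - (Φ^[n] v) t| ≤ dist u v * (S.K ^ n * (pb t) ^ n / n !) := by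
    intro n
    induction n with
    | zero =>
      intro u v t
      simpa [Real.dist_eq] using BoundedContinuousFunction.dist_coe_le_dist (f := u) (g := v) t
    | succ n ih =>
      intro u v t
      have hrw : ∀ w : BoundedContinuousFunction ℝ ℝ,
          (Φ^[n+1] w) t = S.η₀ + ∫ s in (0:ℝ)..(pb t), S.Fop ⇑(Φ^[n] w) s := by
        intro w
        rw [Function.iterate_succ_apply']
        exact coeΦ _ _
      have h0t : (0:ℝ) ≤ pb t := (pbm t).1
      have htb : pb t ≤ b := (pbm t).2
      have hd0 : (0:ℝ) ≤ dist u v := dist_nonneg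
      have heq : (Φ^[n+1] u) t - (Φ^[n+1] v) t
          = ∫ s in (0:ℝ)..(pb t), (S.Fop ⇑(Φ^[n] u) s - S.Fop ⇑(Φ^[n] v) s) := by
        rw [hrw u, hrw v,
          intervalIntegral.integral_sub (hIi _ _ h0t htb) (hIi _ _ h0t htb)]
        ring
      rw [heq]
      have step1 : |∫ s in (0:ℝ)..(pb t), (S.Fop ⇑(Φ^[n] u) s - S.Fop ⇑(Φ^[n] v) s)|
          ≤ ∫ s in (0:ℝ)..(pb t), |S.Fop ⇑(Φ^[n] u) s - S.Fop ⇑(Φ^[n] v) s| :=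
        intervalIntegral.abs_integral_le_integral_abs h0t
      have step2 : (∫ s in (0:ℝ)..(pb t), |S.Fop ⇑(Φ^[n] u) s - S.Fop ⇑(Φ^[n] v) s|)
          ≤ ∫ s in (0:ℝ)..(pb t), (dist u v * S.K ^ (n+1) / n !) * s ^ n := by
        refine intervalIntegral.integral_mono_on h0t
          ((hIi _ _ h0t htb).sub (hIi _ _ h0t htb)).abs
          ((continuous_const.mul (continuous_pow n)).intervalIntegrable _ _) ?_
        intro s hs
        have hd : 0 ≤ dist u v * (S.K ^ n * s ^ n / n !) :=
          mul_nonneg dist_nonneg (div_nonneg (mul_nonneg (pow_nonneg hK n) (pow_nonneg hs.1 n))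
            (Nat.cast_nonneg _))
        have hF := S.F_diff (Φ^[n] u).continuous.measurable (Φ^[n] v).continuous.measurable
          (hbdd _) (hbdd _) hs.1 hd (fun τ hτ => by
            refine le_trans (ih u v τ) ?_
            have hpτ : pb τ ≤ s := (pble τ hτ.1).trans hτ.2
            have : (pb τ) ^ n ≤ s ^ n := pow_le_pow_left₀ (pbm τ).1 hpτ n
            have hKn : (0:ℝ) ≤ S.K ^ n := pow_nonneg hK n
            have hfac : (0:ℝ) < (n ! : ℝ) := by exact_mod_cast Nat.factorial_pos n
            refine mul_le_mul_of_nonneg_left ?_ hd0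
            exact div_le_div_of_nonneg_right' (mul_le_mul_of_nonneg_left this hKn) hfac)
        refine hF.trans (le_of_eq ?_)
        ring
      have step3 : (∫ s in (0:ℝ)..(pb t), (dist u v * S.K ^ (n+1) / n !) * s ^ n)
          = (dist u v * S.K ^ (n+1) / n !) * ((pb t) ^ (n+1) / (n+1)) := by
        rw [intervalIntegral.integral_const_mul, integral_pow]
        norm_num
      have hfac : ((n+1)! : ℝ) = (n+1) * (n ! : ℝ) := by
        rw [Nat.factorial_succ]; push_cast; ring
      have hfacne : (n ! : ℝ) ≠ 0 := by exact_mod_cast (Nat.factorial_pos n).ne'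
      have hend : (dist u v * S.K ^ (n+1) / n !) * ((pb t) ^ (n+1) / (n+1))
          = dist u v * (S.K ^ (n+1) * (pb t) ^ (n+1) / ((n+1)!)) := by
        rw [hfac]; field_simp
      calc |∫ s in (0:ℝ)..(pb t), (S.Fop ⇑(Φ^[n] u) s - S.Fop ⇑(Φ^[n] v) s)|
          ≤ ∫ s in (0:ℝ)..(pb t), (dist u v * S.K ^ (n+1) / n !) * s ^ n := step1.trans step2
        _ = dist u v * (S.K ^ (n+1) * (pb t) ^ (n+1) / ((n+1)!)) := by rw [step3, hend]
  -- choose n₀ with contraction factor < 1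
  obtain ⟨n₀, hn₀⟩ : ∃ n : ℕ, (S.K * b) ^ n / n ! < 1 :=
    ((FloorSemiring.tendsto_pow_div_factorial_atTop (S.K * b)).eventually_lt_const
      (by norm_num : (0:ℝ) < 1)).exists
  set q : ℝ := S.K ^ n₀ * b ^ n₀ / n₀ ! with hq
  have hq1 : q < 1 := by rwa [hq, ← mul_pow]
  have hq0 : 0 ≤ q := by positivity
  have hdistq : ∀ u v : BoundedContinuousFunction ℝ ℝ,
      dist (Φ^[n₀] u) (Φ^[n₀] v) ≤ q * dist u v := by
    intro u v
    refine (BoundedContinuousFunction.dist_le (mul_nonneg hq0 dist_nonneg)).2 fun t => ?_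
    rw [Real.dist_eq]
    refine le_trans (claim n₀ u v t) ?_
    have h1 : (pb t) ^ n₀ ≤ b ^ n₀ := pow_le_pow_left₀ (pbm t).1 (pbm t).2 n₀
    have hKn : (0:ℝ) ≤ S.K ^ n₀ := pow_nonneg hK n₀
    have hfac : (0:ℝ) < (n₀ ! : ℝ) := by exact_mod_cast Nat.factorial_pos n₀
    calc dist u v * (S.K ^ n₀ * (pb t) ^ n₀ / n₀ !)
        ≤ dist u v * (S.K ^ n₀ * b ^ n₀ / n₀ !) := by
          refine mul_le_mul_of_nonneg_left ?_ dist_nonneg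
          exact div_le_div_of_nonneg_right' (mul_le_mul_of_nonneg_left h1 hKn) hfac
      _ = q * dist u v := by rw [hq]; ring
  have hlip : LipschitzWith (Real.toNNReal q) (Φ^[n₀]) := by
    refine LipschitzWith.of_dist_le_mul fun u v => ?_
    rw [Real.coe_toNNReal q hq0]
    exact hdistq u v
  have hcontr : ContractingWith (Real.toNNReal q) (Φ^[n₀]) :=
    ⟨Real.toNNReal_lt_one.2 hq1, hlip⟩
  set z := hcontr.fixedPoint (Φ^[n₀]) with hzdef
  have hzfix : Φ^[n₀] z = z := hcontr.fixedPoint_isFixedPt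
  have hΦz : Φ z = z := by
    have h1 : Φ^[n₀] (Φ z) = Φ z := by
      have h2 : Φ^[n₀] (Φ z) = Φ^[n₀+1] z := (Function.iterate_succ_apply Φ n₀ z).symm
      rw [h2, Function.iterate_succ_apply', hzfix]
    have h2 := hdistq (Φ z) z
    rw [h1, hzfix] at h2
    have h3 : dist (Φ z) z = 0 := by
      nlinarith [dist_nonneg (x := Φ z) (y := z)]
    exact eq_of_dist_eq_zero h3
  refine ⟨⇑z, z.continuous,
    ⟨‖z‖, fun τ => by simpa [Real.norm_eq_abs] using z.norm_coe_le_norm τ⟩, fun t ht => ?_⟩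
  conv_lhs => rw [← hΦz]
  rw [coeΦ, pbid t ht]

lemma delay_eq (y w : ℝ → ℝ) (s : ℝ) (hs : 0 ≤ s)
    (hae : ∀ᵐ τ ∂(volume : Measure ℝ), 0 ≤ τ → τ ≤ s → y τ = w τ)
    (hN : ∀ᵐ τ ∂(volume : Measure ℝ), τ ∈ Ico (-S.T) 0 → y τ = S.h τ) :
    (∫ ξ in Ioc (-S.T) 0, S.a ξ * y (s + ξ)) = S.Dop w s := by
  unfold Dop
  refine setIntegral_congr_ae measurableSet_Ioc ?_
  have htrans : ∀ᵐ ξ ∂(volume : Measure ℝ),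
      ((0 ≤ s + ξ → s + ξ ≤ s → y (s + ξ) = w (s + ξ)) ∧
        (s + ξ ∈ Ico (-S.T) 0 → y (s + ξ) = S.h (s + ξ))) := by
    have hB := hae.and hN
    rw [ae_iff] at hB ⊢
    have hpre : {ξ : ℝ | ¬ ((0 ≤ s + ξ → s + ξ ≤ s → y (s + ξ) = w (s + ξ)) ∧
        (s + ξ ∈ Ico (-S.T) 0 → y (s + ξ) = S.h (s + ξ)))}
        = (fun ξ : ℝ => s + ξ) ⁻¹' {τ : ℝ | ¬ ((0 ≤ τ → τ ≤ s → y τ = w τ) ∧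
          (τ ∈ Ico (-S.T) 0 → y τ = S.h τ))} := rfl
    rw [hpre, measure_preimage_add]
    exact hB
  filter_upwards [htrans] with ξ hξ hmem
  rcases lt_or_ge (s + ξ) 0 with hneg | hpos
  · have hmem2 : s + ξ ∈ Ico (-S.T) 0 := ⟨by linarith [hmem.1], hneg⟩
    rw [hξ.2 hmem2]
    unfold Ext
    rw [if_pos hneg]
  · rw [hξ.1 hpos (by linarith [hmem.2])]
    unfold Ext
    rw [if_neg (not_lt.2 hpos)]

end Stp
end DelayAux


open DelayAux in
/-- For every initial datum `η ∈ H₊` and every control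
`c ∈ L¹_loc([0,∞);ℝ₊)`, the delay state equation admits a unique solution,
which is absolutely continuous on `[0,∞)`. -/
theorem exists_unique_solution_delay_equation
    (T r Cf : ℝ) (hT : 0 < T) (hr : 0 < r)
    (a : ℝ → ℝ) (ha : AHyp T a)
    (f₀ : ℝ × ℝ → ℝ) (hf : FHyp Cf f₀)
    (η₀ : ℝ) (hη₀ : 0 < η₀) (η₁ : Lp ℝ 2 (μT T))
    (c : ℝ → ℝ) (hc : IsControl c) :
    ∃ x : ℝ → ℝ, (IsSol T r a f₀ η₀ η₁ c x ∧ IsACOn x) ∧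
      ∀ y : ℝ → ℝ, IsSol T r a f₀ η₀ η₁ c y → ∀ t : ℝ, 0 ≤ t → y t = x t := by
  classical
  obtain ⟨hcpos, hcloc⟩ := hc
  have hTneg : -T ≤ (0:ℝ) := by linarith
  -- the history function
  set h : ℝ → ℝ := fun s => if s ∈ Ico (-T) (0:ℝ) then (η₁ : ℝ → ℝ) s else 0 with hh
  have hhm : Measurable h :=
    Measurable.ite measurableSet_Ico (Lp.stronglyMeasurable η₁).measurable measurable_const
  haveI : IsFiniteMeasure (μT T) := by
    constructor
    rw [μT, Measure.restrict_apply_univ]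
    exact measure_Icc_lt_top
  have hhi : Integrable h volume := by
    have h2 : Integrable (⇑η₁) (μT T) := (Lp.memLp η₁).integrable one_le_two
    have h3 : IntegrableOn (⇑η₁) (Icc (-T) 0) volume := h2
    have h4 : IntegrableOn (⇑η₁) (Ico (-T) 0) volume := h3.mono_set Ico_subset_Icc_self
    have h5 : h = Set.indicator (Ico (-T) 0) (⇑η₁) := by
      funext s; simp [hh, Set.indicator_apply]
    rw [h5, integrable_indicator_iff measurableSet_Ico]
    exact h4
  -- the kernel is continuous on [-T,0], hence bounded and measurable there
  obtain ⟨a', ha'mem, ha'eq⟩ := ha.w12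
  have ha'int : IntegrableOn a' (Icc (-T) 0) volume := ha'mem.integrable one_le_two
  have haco : ContinuousOn a (Icc (-T) 0) := by
    have hprim : ContinuousOn (fun x => a (-T) + ∫ ξ in (-T)..x, a' ξ) (Icc (-T) 0) := by
      refine continuousOn_const.add ?_
      have := intervalIntegral.continuousOn_primitive_interval (a := -T) (b := (0:ℝ))
        (μ := volume) (f := a') (by rw [uIcc_of_le hTneg]; exact ha'int)
      rwa [uIcc_of_le hTneg] at this
    exact ContinuousOn.congr hprim (fun s hs => ha'eq s hs)
  obtain ⟨Ca₀, hCa₀⟩ := isCompact_Icc.exists_bound_of_continuousOn haco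
  have haM : AEStronglyMeasurable a (volume.restrict (Ioc (-T) 0)) :=
    (haco.aestronglyMeasurable measurableSet_Icc).mono_measure
      (Measure.restrict_mono Ioc_subset_Icc_self le_rfl)
  -- assemble the setup
  have hCa' : ∀ ξ ∈ Icc (-T) (0:ℝ), |a ξ| ≤ max Ca₀ 0 :=
    fun ξ hξ => le_trans (by rw [← Real.norm_eq_abs]; exact hCa₀ ξ hξ) (le_max_left _ _)
  have hlip' : ∀ p q : ℝ × ℝ, |f₀ p - f₀ q| ≤ max Cf 0 * max |p.1 - q.1| |p.2 - q.2| := by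
    intro p q
    have h1 := hf.lip.dist_le_mul p q
    rw [Prod.dist_eq, Real.dist_eq, Real.dist_eq, Real.dist_eq] at h1
    rwa [Real.coe_toNNReal'] at h1
  have hci' : ∀ b : ℝ, IntegrableOn c (Icc 0 b) volume := by
    intro b
    rcases le_or_gt 0 b with hb | hb
    · exact hcloc.integrableOn_compact_subset (fun z hz => hz.1) isCompact_Icc
    · rw [Icc_eq_empty (by linarith)]; exact integrableOn_empty
  set S : Stp := Stp.mk T r η₀ (max Ca₀ 0) (max Cf 0) (∫ s, |h s|) a h c f₀ hT (le_max_right _ _) hCa' haM hhm hhi le_rfl (le_max_right _ _) hlip' hf.lip.continuous hci' with hSdef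
  -- fixed points on [0,n] for each n
  have exn : ∀ n : ℕ, ∃ u : ℝ → ℝ, Continuous u ∧ (∃ M, ∀ τ, |u τ| ≤ M) ∧
      ∀ t ∈ Icc (0:ℝ) ((n:ℝ)), u t = S.η₀ + ∫ s in (0:ℝ)..t, S.Fop u s :=
    fun n => S.exFix (n:ℝ) (Nat.cast_nonneg n)
  choose un hun1 hun2 hun3 using exn
  choose Mn hMn using hun2
  have Bddn : ∀ n, Bdd (un n) (Mn n) := fun n τ _ => hMn n τ
  -- consistency of the local solutions
  have cons : ∀ (n m : ℕ) (t : ℝ), 0 ≤ t → t ≤ (n:ℝ) → t ≤ (m:ℝ) → un n t = un m t := by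
    intro n m t ht htn htm
    have hbmin : (0:ℝ) ≤ min (n:ℝ) (m:ℝ) := le_min (Nat.cast_nonneg _) (Nat.cast_nonneg _)
    obtain ⟨D₀, hD₀⟩ := (isCompact_Icc (a := (0:ℝ))
      (b := min (n:ℝ) (m:ℝ))).exists_bound_of_continuousOn
      (((hun1 n).sub (hun1 m)).continuousOn)
    exact S.keyU (hun1 n).measurable (hun1 m).measurable (Bddn n) (Bddn m) hbmin
      (fun z hz => by simpa [Real.norm_eq_abs] using hD₀ z hz)
      (fun z hz => hun3 n z ⟨hz.1, hz.2.trans (min_le_left _ _)⟩)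
      (fun z hz => hun3 m z ⟨hz.1, hz.2.trans (min_le_right _ _)⟩)
      t ⟨ht, le_min htn htm⟩
  -- the global solution
  set X : ℝ → ℝ := fun t => un (⌊t⌋₊ + 1) t with hX
  have hceil : ∀ t : ℝ, t ≤ ((⌊t⌋₊ + 1 : ℕ) : ℝ) := by
    intro t
    push_cast
    exact (Nat.lt_floor_add_one t).le
  have XeqN : ∀ (n : ℕ) (t : ℝ), 0 ≤ t → t ≤ (n:ℝ) → X t = un n t :=
    fun n t ht htn => cons _ n t ht (hceil t) htn
  set x : ℝ → ℝ := S.Ext X with hx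
  have hxX : ∀ t : ℝ, 0 ≤ t → x t = X t := fun t ht => if_neg (not_lt.2 ht)
  -- `Fop X` agrees with `Fop (un n)` on `[0,n]`
  have Fcong : ∀ (n : ℕ) (s : ℝ), 0 ≤ s → s ≤ (n:ℝ) → S.Fop X s = S.Fop (un n) s := by
    intro n s hs hsn
    have h1 : X s = un n s := XeqN n s hs hsn
    have h2 : S.Dop X s = S.Dop (un n) s := by
      refine setIntegral_congr_fun measurableSet_Ioc ?_
      intro ξ hξ
      have h3 : S.Ext X (s + ξ) = S.Ext (un n) (s + ξ) := by
        unfold Stp.Ext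
        split
        · rfl
        · exact XeqN n (s + ξ) (not_lt.1 (by assumption)) (by linarith [hξ.2])
      show S.a ξ * S.Ext X (s + ξ) = S.a ξ * S.Ext (un n) (s + ξ)
      rw [h3]
    unfold Stp.Fop
    rw [h1, h2]
  -- the integral equation for X
  have xeq : ∀ t : ℝ, 0 ≤ t → X t = S.η₀ + ∫ s in (0:ℝ)..t, S.Fop X s := by
    intro t ht
    have htn : t ≤ ((⌊t⌋₊ + 1 : ℕ) : ℝ) := hceil t
    rw [show X t = un (⌊t⌋₊ + 1) t from rfl, hun3 (⌊t⌋₊ + 1) t ⟨ht, htn⟩]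
    congr 1
    refine intervalIntegral.integral_congr ?_
    intro s hs
    rw [uIcc_of_le ht] at hs
    exact (Fcong (⌊t⌋₊ + 1) s hs.1 (hs.2.trans htn)).symm
  -- bridge: interval integrals vs Ioc integrals
  have hIoc : ∀ (w : ℝ → ℝ) (s : ℝ), (∫ ξ in (-T)..(0:ℝ), a ξ * w (s + ξ))
      = ∫ ξ in Ioc (-T) 0, a ξ * w (s + ξ) :=
    fun w s => intervalIntegral.integral_of_le hTneg
  -- the `IsSol` integrand for `x` is `Fop X`
  have hisol_int : ∀ s : ℝ, 0 ≤ s →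
      (r * x s + f₀ (x s, ∫ ξ in (-T)..(0:ℝ), a ξ * x (s + ξ)) - c s) = S.Fop X s := by
    intro s hs
    unfold Stp.Fop
    rw [hxX s hs, hIoc x s]
    rfl
  have hsol : IsSol T r a f₀ η₀ η₁ c x := by
    constructor
    · refine ae_restrict_of_forall_mem measurableSet_Ico ?_
      intro s hs
      have h1 : x s = h s := by
        rw [hx]; unfold Stp.Ext; rw [if_pos hs.2]
      have h2 : h s = (η₁ : ℝ → ℝ) s := by
        rw [hh]; simp only [if_pos hs]
      rw [h1, h2]
    · intro t ht
      rw [hxX t ht, xeq t ht]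
      show S.η₀ + _ = η₀ + _
      congr 1
      refine (intervalIntegral.integral_congr ?_).symm
      intro s hs
      rw [uIcc_of_le ht] at hs
      exact hisol_int s hs.1
  -- absolute continuity
  have hACloc : LocallyIntegrableOn (S.Fop X) (Ici 0) volume := by
    intro t ht
    refine ⟨Icc 0 (t+1), ?_, ?_⟩
    · have h1 : Iic (t+1) ∈ 𝓝 t := Iic_mem_nhds (by linarith)
      have h2 := inter_mem_nhdsWithin (Ici (0:ℝ)) h1
      rwa [Ici_inter_Iic] at h2
    · have hn : t + 1 ≤ ((⌊t+1⌋₊ + 1 : ℕ) : ℝ) := hceil (t+1)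
      have h2 : IntegrableOn (S.Fop (un (⌊t+1⌋₊ + 1))) (Icc 0 ((⌊t+1⌋₊ + 1 : ℕ) : ℝ)) volume :=
        S.F_int (hun1 _).measurable (Bddn _) _
      have h3 : IntegrableOn (S.Fop X) (Icc 0 ((⌊t+1⌋₊ + 1 : ℕ) : ℝ)) volume := by
        refine Integrable.congr h2 ?_
        refine (ae_restrict_iff' measurableSet_Icc).2 ?_
        exact Filter.Eventually.of_forall fun s hs => (Fcong _ s hs.1 hs.2).symm
      exact h3.mono_set (fun z hz => ⟨hz.1, hz.2.trans hn⟩)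
  have hAC : IsACOn x := by
    refine ⟨S.Fop X, hACloc, ?_⟩
    intro t ht
    have h0 : x 0 = η₀ := by
      rw [hxX 0 le_rfl, xeq 0 le_rfl]
      show S.η₀ + _ = η₀
      simp; rfl
    rw [h0, hxX t ht, xeq t ht]
  refine ⟨x, ⟨hsol, hAC⟩, ?_⟩
  -- uniqueness
  intro y hy
  set gy : ℝ → ℝ := fun s =>
    r * y s + f₀ (y s, ∫ ξ in (-T)..(0:ℝ), a ξ * y (s + ξ)) - c s with hgy
  have hyeq : ∀ τ : ℝ, 0 ≤ τ → y τ = η₀ + ∫ s in (0:ℝ)..τ, gy s := hy.2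
  have hN : ∀ᵐ τ ∂(volume : Measure ℝ), τ ∈ Ico (-T) 0 → y τ = h τ := by
    have h1 := hy.1
    rw [ae_restrict_iff' measurableSet_Ico] at h1
    refine h1.mono fun τ hτ hmem => ?_
    rw [hτ hmem, hh]
    simp only [if_pos hmem]
  -- uniqueness on any interval where the integrand is integrable
  have hU1 : ∀ b : ℝ, 0 ≤ b → IntervalIntegrable gy volume 0 b →
      ∀ τ ∈ Icc (0:ℝ) b, y τ = x τ := by
    intro b hb hIb
    have hIcc : IntegrableOn gy (Icc 0 b) volume := by
      rw [integrableOn_Icc_iff_integrableOn_Ioc]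
      exact (intervalIntegrable_iff_integrableOn_Ioc_of_le hb).1 hIb
    have hycont : ContinuousOn y (Icc 0 b) := by
      have hP : ContinuousOn (fun τ => η₀ + ∫ s in (0:ℝ)..τ, gy s) (Icc 0 b) := by
        refine continuousOn_const.add ?_
        have := intervalIntegral.continuousOn_primitive_interval (a := (0:ℝ)) (b := b)
          (μ := volume) (f := gy) (by rw [uIcc_of_le hb]; exact hIcc)
        rwa [uIcc_of_le hb] at this
      exact ContinuousOn.congr hP (fun τ hτ => hyeq τ hτ.1)
    set pb2 : ℝ → ℝ := fun τ => max 0 (min τ b) with hpb2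
    have pbc : Continuous pb2 := continuous_const.max (continuous_id.min continuous_const)
    have pbm : ∀ τ, pb2 τ ∈ Icc (0:ℝ) b :=
      fun τ => ⟨le_max_left _ _, max_le hb (min_le_right _ _)⟩
    set yc : ℝ → ℝ := fun τ => y (pb2 τ) with hyc
    have hycC : Continuous yc := hycont.comp_continuous pbc pbm
    have hyceq : ∀ τ, 0 ≤ τ → τ ≤ b → yc τ = y τ := by
      intro τ h1 h2
      rw [hyc]
      simp [hpb2, min_eq_left h2, max_eq_right h1]
    obtain ⟨My, hMy⟩ := isCompact_Icc.exists_bound_of_continuousOn hycont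
    have hycB : Bdd yc My := by
      intro τ _
      rw [hyc, ← Real.norm_eq_abs]
      exact hMy (pb2 τ) (pbm τ)
    have hFyc : ∀ s ∈ Icc (0:ℝ) b, S.Fop yc s = gy s := by
      intro s hs
      have hdel : (∫ ξ in Ioc (-T) 0, a ξ * y (s + ξ)) = S.Dop yc s :=
        S.delay_eq y yc s hs.1
          (Filter.Eventually.of_forall fun τ h1 h2 => (hyceq τ h1 (h2.trans hs.2)).symm) hN
      rw [hgy]
      show S.r * yc s + S.f₀ (yc s, S.Dop yc s) - S.c s = _
      dsimp only
      rw [hyceq s hs.1 hs.2, hIoc y s, hdel]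
    have hyceq2 : ∀ τ ∈ Icc (0:ℝ) b, yc τ = S.η₀ + ∫ s in (0:ℝ)..τ, S.Fop yc s := by
      intro τ hτ
      rw [hyceq τ hτ.1 hτ.2, hyeq τ hτ.1]
      show η₀ + _ = S.η₀ + _
      congr 1
      refine (intervalIntegral.integral_congr ?_).symm
      intro s hs
      rw [uIcc_of_le hτ.1] at hs
      exact hFyc s ⟨hs.1, hs.2.trans hτ.2⟩
    have hbn : b ≤ ((⌊b⌋₊ + 1 : ℕ) : ℝ) := hceil b
    obtain ⟨D₀, hD₀⟩ := isCompact_Icc.exists_bound_of_continuousOn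
      ((hycC.sub (hun1 (⌊b⌋₊ + 1))).continuousOn)
    have hkey := S.keyU hycC.measurable (hun1 (⌊b⌋₊ + 1)).measurable hycB (Bddn (⌊b⌋₊ + 1)) hb
      (fun z hz => by simpa [Real.norm_eq_abs] using hD₀ z hz)
      hyceq2 (fun z hz => hun3 (⌊b⌋₊ + 1) z ⟨hz.1, hz.2.trans hbn⟩)
    intro τ hτ
    calc y τ = yc τ := (hyceq τ hτ.1 hτ.2).symm
      _ = un (⌊b⌋₊ + 1) τ := hkey τ hτ
      _ = X τ := (XeqN (⌊b⌋₊ + 1) τ hτ.1 (hτ.2.trans hbn)).symm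
      _ = x τ := (hxX τ hτ.1).symm
  intro t ht
  set SS : Set ℝ := {b : ℝ | 0 ≤ b ∧ IntervalIntegrable gy volume 0 b} with hSS
  have h0S : (0:ℝ) ∈ SS := ⟨le_rfl, IntervalIntegrable.refl⟩
  by_cases hbdd : BddAbove SS
  · exfalso
    set t₀ := sSup SS with ht₀
    have ht₀0 : 0 ≤ t₀ := le_csSup hbdd h0S
    have hyx : ∀ τ : ℝ, 0 ≤ τ → τ < t₀ → y τ = x τ := by
      intro τ h1 h2
      obtain ⟨b', hb'S, hb'⟩ := exists_lt_of_lt_csSup ⟨0, h0S⟩ h2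
      exact hU1 b' hb'S.1 hb'S.2 τ ⟨h1, hb'.le⟩
    have hyη : ∀ τ : ℝ, t₀ < τ → y τ = η₀ := by
      intro τ hτ
      have hτ0 : 0 ≤ τ := ht₀0.trans hτ.le
      have hni : ¬ IntervalIntegrable gy volume 0 τ := by
        intro hcon
        exact absurd (le_csSup hbdd ⟨hτ0, hcon⟩) (not_le.2 hτ)
      have h0 : (∫ s in (0:ℝ)..τ, gy s) = 0 := by
        rw [intervalIntegral.integral_of_le hτ0]
        refine integral_undef ?_
        intro hcon
        exact hni ((intervalIntegrable_iff_integrableOn_Ioc_of_le hτ0).2 hcon)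
      rw [hyeq τ hτ0, h0, add_zero]
    have ht₀n : t₀ ≤ ((⌊t₀⌋₊ + 1 : ℕ) : ℝ) := hceil t₀
    set w : ℝ → ℝ := fun τ => if τ < t₀ then un (⌊t₀⌋₊ + 1) τ else η₀ with hw
    have hwm : Measurable w :=
      Measurable.ite measurableSet_Iio (hun1 _).measurable measurable_const
    have hwB : Bdd w (max (Mn (⌊t₀⌋₊ + 1)) |η₀|) := by
      intro τ _
      rw [hw]
      dsimp only
      split
      · exact (hMn _ τ).trans (le_max_left _ _)
      · exact le_max_right _ _
    have haene : ∀ᵐ τ ∂(volume : Measure ℝ), τ ≠ t₀ := by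
      rw [ae_iff]
      have h1 : {τ : ℝ | ¬ τ ≠ t₀} = {t₀} := by ext z; simp
      rw [h1]
      exact measure_singleton t₀
    have hyw : ∀ᵐ τ ∂(volume : Measure ℝ), 0 ≤ τ → y τ = w τ := by
      filter_upwards [haene] with τ hne h0τ
      rw [hw]
      dsimp only
      rcases lt_trichotomy τ t₀ with hlt | heq | hgt
      · rw [if_pos hlt, hyx τ h0τ hlt, hxX τ h0τ, XeqN _ τ h0τ (by linarith)]
      · exact absurd heq hne
      · rw [if_neg (not_lt.2 hgt.le), hyη τ hgt]
    have hFcong : ∀ᵐ s ∂(volume : Measure ℝ), s ∈ Icc (0:ℝ) (t₀+1) → gy s = S.Fop w s := by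
      filter_upwards [hyw] with s hyws hs
      have hdel : (∫ ξ in Ioc (-T) 0, a ξ * y (s + ξ)) = S.Dop w s :=
        S.delay_eq y w s hs.1 (hyw.mono fun τ hτ h1 _ => hτ h1) hN
      rw [hgy]
      show _ = S.r * w s + S.f₀ (w s, S.Dop w s) - S.c s
      dsimp only
      rw [hIoc y s, hdel, hyws hs.1]
    have hFi : IntegrableOn (S.Fop w) (Icc 0 (t₀+1)) volume := S.F_int hwm hwB _
    have hgyI : IntegrableOn gy (Icc 0 (t₀+1)) volume := by
      refine Integrable.congr hFi ?_
      refine (ae_restrict_iff' measurableSet_Icc).2 ?_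
      exact hFcong.mono fun s hs hmem => (hs hmem).symm
    have hIv2 : IntervalIntegrable gy volume 0 (t₀+1) :=
      (intervalIntegrable_iff_integrableOn_Ioc_of_le (by linarith)).2
        (hgyI.mono_set Ioc_subset_Icc_self)
    have hmem2 : t₀ + 1 ∈ SS := ⟨by linarith, hIv2⟩
    have := le_csSup hbdd hmem2
    linarith
  · obtain ⟨b, hbS, hblt⟩ := not_bddAbove_iff.1 hbdd t
    exact hU1 b hbS.1 hbS.2 t ⟨ht, hblt.le⟩
end
end

section
/- Setting Ū₁ = lim_{s→+∞} U₁(s) and Ū₂ = lim_{s→+∞} U₂(s), for every fixed η₁ ∈ L²([-T,0];ℝ) one has lim_{η₀→+∞} V(η₀,η₁) = (Ū₁ + Ū₂)/ρ. -/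
open MeasureTheory Real Set Filter Topology

noncomputable section

/-- Hypotheses on the utility functions `U₁, U₂`. -/
structure UHyp (ρ Cf : ℝ) (U₁ U₂ : ℝ → ℝ) : Prop where
  u1_cont : ContinuousOn U₁ (Ici 0)
  u1_c2 : ContDiffOn ℝ 2 U₁ (Ioi 0)
  u1_deriv_pos : ∀ t : ℝ, 0 < t → 0 < deriv U₁ t
  u1_deriv_top : Tendsto (deriv U₁) (𝓝[>] (0:ℝ)) atTop
  u1_deriv2_neg : ∀ t : ℝ, 0 < t → deriv (deriv U₁) t < 0
  u1_bdd : ∃ M : ℝ, ∀ t : ℝ, 0 ≤ t → |U₁ t| ≤ M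
  u2_cont : ContinuousOn U₂ (Ioi 0)
  u2_mono : MonotoneOn U₂ (Ioi 0)
  u2_conc : ConcaveOn ℝ (Ioi 0) U₂
  u2_bddAbove : ∃ M : ℝ, ∀ t : ℝ, 0 < t → U₂ t ≤ M
  u2_int : IntegrableOn (fun t => Real.exp (-ρ * t) * U₂ (Real.exp (-Cf * t))) (Ioi 0)
/-- The discounted running payoff `t ↦ e^{-ρt}(U₁(c(t)) + U₂(x(t)))`. -/
def payoff (ρ : ℝ) (U₁ U₂ : ℝ → ℝ) (c x : ℝ → ℝ) : ℝ → ℝ :=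
  fun t => Real.exp (-ρ * t) * (U₁ (c t) + U₂ (x t))

/-- The set of finite values `J(η;c)` attained by admissible controls `c ∈ 𝒞(η)`
(i.e. controls whose state trajectory stays strictly positive) with integrable
payoff.  Since `U₁, U₂` are bounded above, `J(η;c) > -∞` exactly when the payoff
is integrable. -/
def Jset (T r ρ : ℝ) (a : ℝ → ℝ) (f₀ : ℝ × ℝ → ℝ) (U₁ U₂ : ℝ → ℝ) (η : Hsp T) :
    Set ℝ :=
  { v | ∃ c x : ℝ → ℝ, IsControl c ∧ IsSol T r a f₀ η.1 η.2 c x ∧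
      (∀ t : ℝ, 0 ≤ t → 0 < x t) ∧
      IntegrableOn (payoff ρ U₁ U₂ c x) (Ioi 0) ∧
      v = ∫ t in Ioi (0:ℝ), payoff ρ U₁ U₂ c x t }

/-- The value function `V(η) = sup_{c ∈ 𝒞(η)} J(η;c)`. -/
def Vfn (T r ρ : ℝ) (a : ℝ → ℝ) (f₀ : ℝ × ℝ → ℝ) (U₁ U₂ : ℝ → ℝ) (η : Hsp T) : ℝ :=
  sSup (Jset T r ρ a f₀ U₁ U₂ η)

/-- The domain `D(V) = {η ∈ H₊ : V(η) > -∞}` of the value function. -/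
def DV (T r ρ : ℝ) (a : ℝ → ℝ) (f₀ : ℝ × ℝ → ℝ) (U₁ U₂ : ℝ → ℝ) : Set (Hsp T) :=
  { η | 0 < η.1 ∧ (Jset T r ρ a f₀ U₁ U₂ η).Nonempty }


namespace VFLaux

/-- candidate trajectory -/
def xF (L η₀ : ℝ) (w : ℝ → ℝ) : ℝ → ℝ :=
  fun s => if s < 0 then w s else η₀ * Real.exp (-(L * s))

/-- delay term -/
def gF (T L η₀ : ℝ) (a w : ℝ → ℝ) : ℝ → ℝ :=
  fun s => ∫ ξ in (-T)..(0:ℝ), a ξ * xF L η₀ w (s + ξ)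

/-- candidate control -/
def cF (T r L η₀ : ℝ) (a w : ℝ → ℝ) (f₀ : ℝ × ℝ → ℝ) : ℝ → ℝ :=
  fun s => (r + L) * xF L η₀ w s + f₀ (xF L η₀ w s, gF T L η₀ a w s)

def chi (T : ℝ) (w : ℝ → ℝ) : ℝ → ℝ := (Ico (-T) (0:ℝ)).indicator w

def phi (L η₀ : ℝ) : ℝ → ℝ := fun u => if u < 0 then 0 else η₀ * Real.exp (-(L * u))

def B1 (T : ℝ) (a w : ℝ → ℝ) : ℝ :=
  ((∫ ξ in Ioc (-T) (0:ℝ), (a ξ)^2) + ∫ u : ℝ, (chi T w u)^2) / 2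

variable {T L η₀ r : ℝ} {a w : ℝ → ℝ} {f₀ : ℝ × ℝ → ℝ}

lemma xF_split (hu : -T < u) : xF L η₀ w u = chi T w u + phi L η₀ u := by
  unfold xF chi phi
  by_cases h : u < 0
  · simp [h, indicator_of_mem (show u ∈ Ico (-T) 0 from ⟨hu.le, h⟩)]
  · simp [h, indicator_of_notMem (show u ∉ Ico (-T) 0 from fun hc => h hc.2)]

lemma xF_nonneg (hη₀ : 0 ≤ η₀) (hu : 0 ≤ u) : 0 ≤ xF L η₀ w u := by
  unfold xF; rw [if_neg (not_lt.2 hu)]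
  positivity

lemma xF_of_nonneg (hu : 0 ≤ u) : xF L η₀ w u = η₀ * Real.exp (-(L * u)) :=
  if_neg (not_lt.2 hu)

lemma xF_le (hη₀ : 0 ≤ η₀) (hL : 0 ≤ L) (hu : 0 ≤ u) : xF L η₀ w u ≤ η₀ := by
  rw [xF_of_nonneg hu]
  calc η₀ * Real.exp (-(L * u)) ≤ η₀ * 1 := by
        apply mul_le_mul_of_nonneg_left _ hη₀
        rw [Real.exp_le_one_iff]; nlinarith
    _ = η₀ := mul_one _

lemma phi_nonneg (hη₀ : 0 ≤ η₀) (u : ℝ) : 0 ≤ phi L η₀ u := by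
  unfold phi; split
  · exact le_rfl
  · positivity

lemma phi_le (hη₀ : 0 ≤ η₀) (hL : 0 ≤ L) (u : ℝ) : phi L η₀ u ≤ η₀ := by
  unfold phi; split
  · exact hη₀
  · rename_i h
    calc η₀ * Real.exp (-(L * u)) ≤ η₀ * 1 := by
          apply mul_le_mul_of_nonneg_left _ hη₀
          rw [Real.exp_le_one_iff]
          nlinarith [not_lt.1 h]
      _ = η₀ := mul_one _

lemma chi_sm (hw : StronglyMeasurable w) : StronglyMeasurable (chi T w) :=
  hw.indicator measurableSet_Ico

lemma phi_sm : StronglyMeasurable (phi L η₀) := by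
  apply StronglyMeasurable.ite (measurableSet_lt measurable_id measurable_const)
  · exact stronglyMeasurable_const
  · exact (by fun_prop : Continuous fun u : ℝ => η₀ * Real.exp (-(L * u))).stronglyMeasurable

lemma xF_sm (hw : StronglyMeasurable w) : StronglyMeasurable (xF L η₀ w) := by
  apply StronglyMeasurable.ite (measurableSet_lt measurable_id measurable_const) hw
  exact (by fun_prop : Continuous fun u : ℝ => η₀ * Real.exp (-(L * u))).stronglyMeasurable

lemma chi_sq_integrable (hw_sq : IntegrableOn (fun u => (w u)^2) (Icc (-T) 0)) :
    Integrable (fun u => (chi T w u)^2) := by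
  have : (fun u => (chi T w u)^2) = (Ico (-T) (0:ℝ)).indicator (fun u => (w u)^2) := by
    funext u
    by_cases h : u ∈ Ico (-T) (0:ℝ)
    · simp [chi, indicator_of_mem h]
    · simp [chi, indicator_of_notMem h]
  rw [this]
  exact (hw_sq.mono_set Ico_subset_Icc_self).integrable_indicator measurableSet_Ico

lemma chi_sq_nonneg : ∀ u, 0 ≤ (chi T w u)^2 := fun u => sq_nonneg _


lemma young_abs (x y : ℝ) : |x * y| ≤ (x^2 + y^2)/2 := by
  rw [abs_mul]
  nlinarith [sq_nonneg (|x| - |y|), sq_abs x, sq_abs y, abs_nonneg x, abs_nonneg y]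

section PerS

variable (hT : 0 < T) (hL : 0 ≤ L) (hη₀ : 0 ≤ η₀)
  (ha_sm : StronglyMeasurable a)
  (ha_sq : IntegrableOn (fun ξ => (a ξ)^2) (Icc (-T) 0))
  (ha_int : IntegrableOn a (Icc (-T) 0))
  (ha_nn : ∀ᵐ ξ ∂(volume.restrict (Icc (-T) (0:ℝ))), 0 ≤ a ξ)
  (hw_sm : StronglyMeasurable w)
  (hw_sq : IntegrableOn (fun u => (w u)^2) (Icc (-T) 0))

include ha_sm ha_sq hw_sm hw_sq in
lemma int_achi (s : ℝ) :
    Integrable (fun ξ => a ξ * chi T w (s + ξ)) (volume.restrict (Ioc (-T) 0)) := by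
  have hdom : Integrable (fun ξ => ((a ξ)^2 + (chi T w (s + ξ))^2)/2)
      (volume.restrict (Ioc (-T) 0)) := by
    apply Integrable.div_const
    exact (ha_sq.mono_set Ioc_subset_Icc_self).add
      (((chi_sq_integrable hw_sq).comp_add_left s).integrableOn)
  apply hdom.mono'
  · exact (ha_sm.mul ((chi_sm hw_sm).comp_measurable (measurable_const_add s))).aestronglyMeasurable
  · filter_upwards with ξ
    rw [Real.norm_eq_abs]
    exact young_abs _ _

include ha_sm ha_int hη₀ hL in
lemma int_aphi (s : ℝ) :
    Integrable (fun ξ => a ξ * phi L η₀ (s + ξ)) (volume.restrict (Ioc (-T) 0)) := by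
  have hdom : Integrable (fun ξ => |a ξ| * η₀) (volume.restrict (Ioc (-T) 0)) :=
    ((ha_int.mono_set Ioc_subset_Icc_self).abs.mul_const η₀)
  apply hdom.mono'
  · exact (ha_sm.mul (phi_sm.comp_measurable (measurable_const_add s))).aestronglyMeasurable
  · filter_upwards with ξ
    rw [Real.norm_eq_abs, abs_mul]
    apply mul_le_mul_of_nonneg_left _ (abs_nonneg _)
    rw [abs_of_nonneg (phi_nonneg hη₀ _)]
    exact phi_le hη₀ hL _

include hT ha_sm ha_sq ha_int hη₀ hL hw_sm hw_sq in
lemma gF_decomp {s : ℝ} (hs : 0 ≤ s) :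
    gF T L η₀ a w s = (∫ ξ in Ioc (-T) (0:ℝ), a ξ * chi T w (s + ξ))
      + ∫ ξ in Ioc (-T) (0:ℝ), a ξ * phi L η₀ (s + ξ) := by
  unfold gF
  rw [intervalIntegral.integral_of_le (by linarith : -T ≤ (0:ℝ)),
    ← integral_add (int_achi ha_sm ha_sq hw_sm hw_sq s) (int_aphi hL hη₀ ha_sm ha_int s)]
  apply setIntegral_congr_fun measurableSet_Ioc
  intro ξ hξ
  have h : -T < s + ξ := by
    have := hξ.1; linarith
  simp only []
  rw [xF_split h]; ring

include ha_sm ha_sq hw_sm hw_sq in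
lemma g1_abs_le (s : ℝ) :
    |∫ ξ in Ioc (-T) (0:ℝ), a ξ * chi T w (s + ξ)| ≤ B1 T a w := by
  have hint := int_achi ha_sm ha_sq hw_sm hw_sq (a := a) (w := w) (T := T) s
  have hchi2 : Integrable (fun ξ => (chi T w (s + ξ))^2) :=
    (chi_sq_integrable hw_sq).comp_add_left s
  have hdom : Integrable (fun ξ => ((a ξ)^2 + (chi T w (s + ξ))^2)/2)
      (volume.restrict (Ioc (-T) 0)) :=
    ((ha_sq.mono_set Ioc_subset_Icc_self).add hchi2.integrableOn).div_const 2
  have h1 : |∫ ξ in Ioc (-T) (0:ℝ), a ξ * chi T w (s + ξ)|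
      ≤ ∫ ξ in Ioc (-T) (0:ℝ), |a ξ * chi T w (s + ξ)| := by
    have := norm_integral_le_integral_norm (μ := volume.restrict (Ioc (-T) 0))
        (fun ξ => a ξ * chi T w (s + ξ))
    simpa only [Real.norm_eq_abs] using this
  have h2 : ∫ ξ in Ioc (-T) (0:ℝ), |a ξ * chi T w (s + ξ)|
      ≤ ∫ ξ in Ioc (-T) (0:ℝ), ((a ξ)^2 + (chi T w (s + ξ))^2)/2 :=
    integral_mono_ae hint.abs hdom (ae_of_all _ fun ξ => young_abs _ _)
  have h3 : ∫ ξ in Ioc (-T) (0:ℝ), ((a ξ)^2 + (chi T w (s + ξ))^2)/2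
      = ((∫ ξ in Ioc (-T) (0:ℝ), (a ξ)^2) + ∫ ξ in Ioc (-T) (0:ℝ), (chi T w (s + ξ))^2)/2 := by
    rw [integral_div, integral_add (ha_sq.mono_set Ioc_subset_Icc_self) hchi2.integrableOn]
  have h4 : ∫ ξ in Ioc (-T) (0:ℝ), (chi T w (s + ξ))^2 ≤ ∫ u : ℝ, (chi T w u)^2 := by
    have h5 : ∫ ξ : ℝ, (chi T w (s + ξ))^2 = ∫ u : ℝ, (chi T w u)^2 := by
      exact integral_add_left_eq_self (fun u => (chi T w u)^2) s
    calc ∫ ξ in Ioc (-T) (0:ℝ), (chi T w (s + ξ))^2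
        ≤ ∫ ξ : ℝ, (chi T w (s + ξ))^2 :=
          setIntegral_le_integral hchi2 (ae_of_all _ fun ξ => sq_nonneg _)
      _ = ∫ u : ℝ, (chi T w u)^2 := h5
  unfold B1
  calc |∫ ξ in Ioc (-T) (0:ℝ), a ξ * chi T w (s + ξ)|
      ≤ ((∫ ξ in Ioc (-T) (0:ℝ), (a ξ)^2) + ∫ ξ in Ioc (-T) (0:ℝ), (chi T w (s + ξ))^2)/2 := by
        rw [← h3]; exact h1.trans h2
    _ ≤ ((∫ ξ in Ioc (-T) (0:ℝ), (a ξ)^2) + ∫ u : ℝ, (chi T w u)^2)/2 := by linarith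

lemma g1_zero {s : ℝ} (hs : T ≤ s) :
    (∫ ξ in Ioc (-T) (0:ℝ), a ξ * chi T w (s + ξ)) = 0 := by
  have : ∀ ξ ∈ Ioc (-T) (0:ℝ), a ξ * chi T w (s + ξ) = 0 := by
    intro ξ hξ
    have : s + ξ ∉ Ico (-T) (0:ℝ) := by
      intro hc
      have := hξ.1
      have := hc.2
      linarith
    rw [chi, indicator_of_notMem this, mul_zero]
  rw [setIntegral_congr_fun measurableSet_Ioc this, integral_zero]

include ha_nn hη₀ in
lemma g2_nonneg (s : ℝ) :
    0 ≤ ∫ ξ in Ioc (-T) (0:ℝ), a ξ * phi L η₀ (s + ξ) := by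
  apply integral_nonneg_of_ae
  filter_upwards [ae_mono (Measure.restrict_mono Ioc_subset_Icc_self le_rfl) ha_nn] with ξ hξ
  exact mul_nonneg hξ (phi_nonneg hη₀ _)

include ha_nn ha_sm ha_int hη₀ hL in
lemma g2_le (s : ℝ) :
    (∫ ξ in Ioc (-T) (0:ℝ), a ξ * phi L η₀ (s + ξ)) ≤ η₀ * ∫ ξ in Ioc (-T) (0:ℝ), a ξ := by
  rw [← integral_const_mul]
  apply integral_mono_ae (int_aphi hL hη₀ ha_sm ha_int s)
    ((ha_int.mono_set Ioc_subset_Icc_self).const_mul η₀)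
  filter_upwards [ae_mono (Measure.restrict_mono Ioc_subset_Icc_self le_rfl) ha_nn] with ξ hξ
  calc a ξ * phi L η₀ (s + ξ) ≤ a ξ * η₀ := mul_le_mul_of_nonneg_left (phi_le hη₀ hL _) hξ
    _ = η₀ * a ξ := mul_comm _ _

include ha_nn in
lemma Ia_nonneg : 0 ≤ ∫ ξ in Ioc (-T) (0:ℝ), a ξ := by
  apply integral_nonneg_of_ae
  exact ae_mono (Measure.restrict_mono Ioc_subset_Icc_self le_rfl) ha_nn

include ha_sq hw_sq in
omit ha_nn in
lemma B1_nonneg : 0 ≤ B1 T a w := by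
  unfold B1
  have h1 : 0 ≤ ∫ ξ in Ioc (-T) (0:ℝ), (a ξ)^2 :=
    integral_nonneg_of_ae (ae_of_all _ fun ξ => sq_nonneg _)
  have h2 : 0 ≤ ∫ u : ℝ, (chi T w u)^2 :=
    integral_nonneg_of_ae (ae_of_all _ fun ξ => sq_nonneg _)
  linarith

include hT hL hη₀ ha_sm ha_sq ha_int ha_nn hw_sm hw_sq in
lemma gF_lower {s : ℝ} (hs : 0 ≤ s) : -(B1 T a w) ≤ gF T L η₀ a w s := by
  rw [gF_decomp hT hL hη₀ ha_sm ha_sq ha_int hw_sm hw_sq hs]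
  have h1 := g1_abs_le ha_sm ha_sq hw_sm hw_sq (a := a) (w := w) (T := T) s
  have h2 := g2_nonneg hη₀ ha_nn (L := L) s
  have := abs_le.1 h1
  linarith [this.1]

include hT hL hη₀ ha_sm ha_sq ha_int ha_nn hw_sm hw_sq in
lemma gF_nonneg_of {s : ℝ} (hsT : T ≤ s) (hs : 0 ≤ s) : 0 ≤ gF T L η₀ a w s := by
  rw [gF_decomp hT hL hη₀ ha_sm ha_sq ha_int hw_sm hw_sq hs,
    g1_zero (w := w) hsT, zero_add]
  exact g2_nonneg hη₀ ha_nn (L := L) s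

include hT hL hη₀ ha_sm ha_sq ha_int ha_nn hw_sm hw_sq in
lemma gF_abs_le {s : ℝ} (hs : 0 ≤ s) :
    |gF T L η₀ a w s| ≤ B1 T a w + η₀ * ∫ ξ in Ioc (-T) (0:ℝ), a ξ := by
  rw [gF_decomp hT hL hη₀ ha_sm ha_sq ha_int hw_sm hw_sq hs]
  have h1 := g1_abs_le ha_sm ha_sq hw_sm hw_sq (a := a) (w := w) (T := T) s
  have h2 := g2_nonneg hη₀ ha_nn (L := L) s
  have h3 := g2_le hL hη₀ ha_sm ha_int ha_nn (T := T) s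
  calc |(∫ ξ in Ioc (-T) (0:ℝ), a ξ * chi T w (s + ξ))
        + ∫ ξ in Ioc (-T) (0:ℝ), a ξ * phi L η₀ (s + ξ)|
      ≤ |∫ ξ in Ioc (-T) (0:ℝ), a ξ * chi T w (s + ξ)|
        + |∫ ξ in Ioc (-T) (0:ℝ), a ξ * phi L η₀ (s + ξ)| := abs_add_le _ _
    _ ≤ B1 T a w + η₀ * ∫ ξ in Ioc (-T) (0:ℝ), a ξ := by
        rw [abs_of_nonneg h2]; exact add_le_add h1 h3

include hT ha_sm hw_sm in
omit hL in
lemma gF_sm : StronglyMeasurable (gF T L η₀ a w) := by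
  have heq : gF T L η₀ a w = fun s => ∫ ξ, (fun p : ℝ × ℝ => a p.2 * xF L η₀ w (p.1 + p.2)) (s, ξ)
      ∂(volume.restrict (Ioc (-T) 0)) := by
    funext s
    exact intervalIntegral.integral_of_le (by linarith : -T ≤ (0:ℝ))
  rw [heq]
  exact MeasureTheory.StronglyMeasurable.integral_prod_right'
    (ν := volume.restrict (Ioc (-T) 0))
    ((ha_sm.comp_measurable measurable_snd).mul
      ((xF_sm hw_sm).comp_measurable (measurable_fst.add measurable_snd)))

include hT ha_sm hw_sm in
omit hL in
lemma cF_sm (hf₀ : Continuous f₀) : StronglyMeasurable (cF T r L η₀ a w f₀) := by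
  unfold cF
  exact (((xF_sm hw_sm).const_mul (r + L)).add
    (hf₀.comp_stronglyMeasurable ((xF_sm hw_sm).prodMk (gF_sm hT ha_sm hw_sm))))

end PerS

lemma flip {Cf : ℝ} (hf : FHyp Cf f₀) (p q : ℝ × ℝ) :
    |f₀ p - f₀ q| ≤ max Cf 0 * (|p.1 - q.1| + |p.2 - q.2|) := by
  have h := hf.lip.dist_le_mul p q
  rw [Real.dist_eq, Prod.dist_eq, Real.dist_eq, Real.dist_eq, Real.coe_toNNReal'] at h
  have hm : max (|p.1 - q.1|) (|p.2 - q.2|) ≤ |p.1 - q.1| + |p.2 - q.2| :=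
    max_le (le_add_of_nonneg_right (abs_nonneg _)) (le_add_of_nonneg_left (abs_nonneg _))
  calc |f₀ p - f₀ q| ≤ max Cf 0 * max (|p.1 - q.1|) (|p.2 - q.2|) := h
    _ ≤ max Cf 0 * (|p.1 - q.1| + |p.2 - q.2|) :=
        mul_le_mul_of_nonneg_left hm (le_max_right _ _)

lemma f00_nonneg {Cf : ℝ} (hf : FHyp Cf f₀) : 0 ≤ f₀ (0, 0) := by
  by_contra hc
  push_neg at hc
  set M := max Cf 0 with hM
  have hM0 : 0 ≤ M := le_max_right _ _
  set ε : ℝ := -f₀ (0, 0) with hε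
  have hε0 : 0 < ε := by simp only [hε]; linarith
  set y : ℝ := ε / (2 * (M + 1)) with hy
  have hy0 : 0 < y := by positivity
  have hpos := hf.pos y hy0
  have hl := flip hf (0, y) (0, 0)
  simp only [sub_zero, sub_self, abs_zero, zero_add] at hl
  have h2 : f₀ (0, y) ≤ f₀ (0, 0) + M * |y| := by
    have := abs_le.1 hl
    linarith [this.2]
  have hMy : M * |y| ≤ ε / 2 := by
    rw [abs_of_pos hy0, hy]
    have h1 : (0:ℝ) < M + 1 := by linarith
    have hz : 0 ≤ ε / (2 * (M + 1)) := le_of_lt (by positivity)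
    calc M * (ε / (2 * (M + 1))) ≤ (M + 1) * (ε / (2 * (M + 1))) := by nlinarith
      _ = ε / 2 := by
          field_simp
  have h6 : f₀ (0, y) ≤ -ε + ε / 2 := by
    have h7 : f₀ (0, 0) = -ε := by rw [hε]; ring
    rw [h7] at h2
    linarith
  linarith

section CF

variable {Cf : ℝ}
variable (hT : 0 < T) (hr : 0 < r) (hL : L = max Cf 0) (hη₀ : 0 ≤ η₀)
  (ha_sm : StronglyMeasurable a)
  (ha_sq : IntegrableOn (fun ξ => (a ξ)^2) (Icc (-T) 0))
  (ha_int : IntegrableOn a (Icc (-T) 0))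
  (ha_nn : ∀ᵐ ξ ∂(volume.restrict (Icc (-T) (0:ℝ))), 0 ≤ a ξ)
  (hw_sm : StronglyMeasurable w)
  (hw_sq : IntegrableOn (fun u => (w u)^2) (Icc (-T) 0))
  (hf : FHyp Cf f₀)

include hT hr hL hη₀ ha_sm ha_sq ha_int ha_nn hw_sm hw_sq hf

lemma cF_ge {s : ℝ} (hs : 0 ≤ s) :
    r * (η₀ * Real.exp (-(L * s))) + min (f₀ (0, -(B1 T a w))) 0
      ≤ cF T r L η₀ a w f₀ s := by
  have hL0 : 0 ≤ L := hL ▸ le_max_right _ _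
  have hxs : xF L η₀ w s = η₀ * Real.exp (-(L * s)) := xF_of_nonneg hs
  have hxs0 : 0 ≤ xF L η₀ w s := xF_nonneg hη₀ hs
  unfold cF
  rcases le_or_gt T s with hsT | hsT
  · have hg : 0 ≤ gF T L η₀ a w s :=
      gF_nonneg_of hT hL0 hη₀ ha_sm ha_sq ha_int ha_nn hw_sm hw_sq hsT hs
    have h1 : f₀ (xF L η₀ w s, 0) ≤ f₀ (xF L η₀ w s, gF T L η₀ a w s) :=
      hf.mono (xF L η₀ w s) hg
    have h2 := flip hf (xF L η₀ w s, (0:ℝ)) ((0:ℝ), (0:ℝ))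
    simp only [sub_zero, sub_self, abs_zero, add_zero] at h2
    have h3 : f₀ (0, 0) - L * |xF L η₀ w s| ≤ f₀ (xF L η₀ w s, 0) := by
      have := abs_le.1 h2
      rw [← hL] at this
      linarith [this.1]
    have h4 := f00_nonneg hf
    rw [abs_of_nonneg hxs0] at h3
    have hmin : min (f₀ (0, -(B1 T a w))) 0 ≤ 0 := min_le_right _ _
    rw [hxs] at h1 h3 hxs0 ⊢
    nlinarith
  · have hg : -(B1 T a w) ≤ gF T L η₀ a w s :=
      gF_lower hT hL0 hη₀ ha_sm ha_sq ha_int ha_nn hw_sm hw_sq hs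
    have h1 : f₀ (xF L η₀ w s, -(B1 T a w)) ≤ f₀ (xF L η₀ w s, gF T L η₀ a w s) :=
      hf.mono (xF L η₀ w s) hg
    have h2 := flip hf (xF L η₀ w s, -(B1 T a w)) ((0:ℝ), -(B1 T a w))
    simp only [sub_zero, sub_self, abs_zero, add_zero] at h2
    have h3 : f₀ (0, -(B1 T a w)) - L * |xF L η₀ w s| ≤ f₀ (xF L η₀ w s, -(B1 T a w)) := by
      have := abs_le.1 h2
      rw [← hL] at this
      linarith [this.1]
    rw [abs_of_nonneg hxs0] at h3
    have hmin : min (f₀ (0, -(B1 T a w))) 0 ≤ f₀ (0, -(B1 T a w)) := min_le_left _ _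
    rw [hxs] at h1 h3 hxs0 ⊢
    nlinarith

lemma cF_nonneg {s : ℝ} (hs : 0 ≤ s)
    (hη₀' : (1 + |f₀ (0, -(B1 T a w))|) * Real.exp (L * T) / r ≤ η₀) :
    0 ≤ cF T r L η₀ a w f₀ s := by
  have hL0 : 0 ≤ L := hL ▸ le_max_right _ _
  have hxs : xF L η₀ w s = η₀ * Real.exp (-(L * s)) := xF_of_nonneg hs
  have hxs0 : 0 ≤ xF L η₀ w s := xF_nonneg hη₀ hs
  unfold cF
  rcases le_or_gt T s with hsT | hsT
  · have hg : 0 ≤ gF T L η₀ a w s :=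
      gF_nonneg_of hT hL0 hη₀ ha_sm ha_sq ha_int ha_nn hw_sm hw_sq hsT hs
    have h1 : f₀ (xF L η₀ w s, 0) ≤ f₀ (xF L η₀ w s, gF T L η₀ a w s) :=
      hf.mono (xF L η₀ w s) hg
    have h2 := flip hf (xF L η₀ w s, (0:ℝ)) ((0:ℝ), (0:ℝ))
    simp only [sub_zero, sub_self, abs_zero, add_zero] at h2
    have h3 : f₀ (0, 0) - L * |xF L η₀ w s| ≤ f₀ (xF L η₀ w s, 0) := by
      have := abs_le.1 h2
      rw [← hL] at this
      linarith [this.1]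
    have h4 := f00_nonneg hf
    rw [abs_of_nonneg hxs0] at h3
    nlinarith
  · have hg : -(B1 T a w) ≤ gF T L η₀ a w s :=
      gF_lower hT hL0 hη₀ ha_sm ha_sq ha_int ha_nn hw_sm hw_sq hs
    have h1 : f₀ (xF L η₀ w s, -(B1 T a w)) ≤ f₀ (xF L η₀ w s, gF T L η₀ a w s) :=
      hf.mono (xF L η₀ w s) hg
    have h2 := flip hf (xF L η₀ w s, -(B1 T a w)) ((0:ℝ), -(B1 T a w))
    simp only [sub_zero, sub_self, abs_zero, add_zero] at h2
    have h3 : f₀ (0, -(B1 T a w)) - L * |xF L η₀ w s| ≤ f₀ (xF L η₀ w s, -(B1 T a w)) := by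
      have := abs_le.1 h2
      rw [← hL] at this
      linarith [this.1]
    rw [abs_of_nonneg hxs0] at h3
    have hkey : 1 + |f₀ (0, -(B1 T a w))| ≤ r * xF L η₀ w s := by
      rw [div_le_iff₀ hr] at hη₀'
      have hexp : Real.exp (-(L * T)) ≤ Real.exp (-(L * s)) := by
        apply Real.exp_le_exp.2
        nlinarith
      have hinv : Real.exp (L * T) * Real.exp (-(L * T)) = 1 := by
        rw [← Real.exp_add]; simp
      have h5 : (1 + |f₀ (0, -(B1 T a w))|) * (Real.exp (L * T) * Real.exp (-(L * T)))
          ≤ η₀ * r * Real.exp (-(L * T)) := by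
        rw [← mul_assoc]
        exact mul_le_mul_of_nonneg_right hη₀' (Real.exp_nonneg _)
      rw [hinv, mul_one] at h5
      rw [hxs]
      calc (1 : ℝ) + |f₀ (0, -(B1 T a w))| ≤ η₀ * r * Real.exp (-(L * T)) := h5
        _ ≤ η₀ * r * Real.exp (-(L * s)) := by
            apply mul_le_mul_of_nonneg_left hexp
            positivity
        _ = r * (η₀ * Real.exp (-(L * s))) := by ring
    have habs : -|f₀ (0, -(B1 T a w))| ≤ f₀ (0, -(B1 T a w)) := neg_abs_le _
    nlinarith

lemma cF_abs_le {s : ℝ} (hs : 0 ≤ s) :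
    |cF T r L η₀ a w f₀ s|
      ≤ (r + L) * η₀ + (|f₀ (0, 0)|
        + L * (η₀ + (B1 T a w + η₀ * ∫ ξ in Ioc (-T) (0:ℝ), a ξ))) := by
  have hL0 : 0 ≤ L := hL ▸ le_max_right _ _
  have hxs0 : 0 ≤ xF L η₀ w s := xF_nonneg hη₀ hs
  have hxsle : xF L η₀ w s ≤ η₀ := xF_le hη₀ hL0 hs
  have hgs : |gF T L η₀ a w s| ≤ B1 T a w + η₀ * ∫ ξ in Ioc (-T) (0:ℝ), a ξ :=
    gF_abs_le hT hL0 hη₀ ha_sm ha_sq ha_int ha_nn hw_sm hw_sq hs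
  have h2 := flip hf (xF L η₀ w s, gF T L η₀ a w s) ((0:ℝ), (0:ℝ))
  simp only [sub_zero] at h2
  rw [← hL] at h2
  have h3 : |f₀ (xF L η₀ w s, gF T L η₀ a w s)|
      ≤ |f₀ (0, 0)| + L * (|xF L η₀ w s| + |gF T L η₀ a w s|) := by
    have := abs_sub_abs_le_abs_sub (f₀ (xF L η₀ w s, gF T L η₀ a w s)) (f₀ (0, 0))
    linarith
  unfold cF
  have h4 : |(r + L) * xF L η₀ w s + f₀ (xF L η₀ w s, gF T L η₀ a w s)|
      ≤ (r + L) * xF L η₀ w s + |f₀ (xF L η₀ w s, gF T L η₀ a w s)| := by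
    calc |(r + L) * xF L η₀ w s + f₀ (xF L η₀ w s, gF T L η₀ a w s)|
        ≤ |(r + L) * xF L η₀ w s| + |f₀ (xF L η₀ w s, gF T L η₀ a w s)| := abs_add_le _ _
      _ = (r + L) * xF L η₀ w s + |f₀ (xF L η₀ w s, gF T L η₀ a w s)| := by
          rw [abs_of_nonneg (by positivity)]
  rw [abs_of_nonneg hxs0] at h3
  have h5 : |gF T L η₀ a w s| ≥ 0 := abs_nonneg _
  nlinarith [mul_le_mul_of_nonneg_left hgs hL0,
    mul_le_mul_of_nonneg_left hxsle (by positivity : (0:ℝ) ≤ r + L)]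

end CF

lemma expDeriv (L η₀ u : ℝ) :
    HasDerivAt (fun v => η₀ * Real.exp (-(L * v))) (-(L * (η₀ * Real.exp (-(L * u))))) u := by
  have h1 : HasDerivAt (fun v : ℝ => -(L * v)) (-L) u := by
    simpa using ((hasDerivAt_id u).const_mul L).fun_neg
  have h2 := h1.exp
  have h3 := h2.const_mul η₀
  exact h3.congr_deriv (by ring)

lemma isSol_xF {T r L η₀ : ℝ} {a : ℝ → ℝ} {f₀ : ℝ × ℝ → ℝ} (hT : 0 < T)
    (η₁ : Lp ℝ 2 (μT T)) :
    IsSol T r a f₀ η₀ η₁ (cF T r L η₀ a (fun u => η₁ u) f₀) (xF L η₀ (fun u => η₁ u)) := by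
  constructor
  · apply (ae_restrict_iff' measurableSet_Ico).2
    exact ae_of_all _ fun s hs => if_pos hs.2
  · intro t ht
    have h1 : (∫ s in (0:ℝ)..t,
        (r * xF L η₀ (fun u => η₁ u) s
          + f₀ (xF L η₀ (fun u => η₁ u) s,
              ∫ ξ in (-T)..(0:ℝ), a ξ * xF L η₀ (fun u => η₁ u) (s + ξ))
          - cF T r L η₀ a (fun u => η₁ u) f₀ s))
        = ∫ s in (0:ℝ)..t, (-(L * (η₀ * Real.exp (-(L * s))))) := by
      apply intervalIntegral.integral_congr
      intro s hs
      rw [uIcc_of_le ht] at hs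
      have hxs : xF L η₀ (fun u => η₁ u) s = η₀ * Real.exp (-(L * s)) :=
        xF_of_nonneg hs.1
      show r * xF L η₀ (fun u => η₁ u) s
          + f₀ (xF L η₀ (fun u => η₁ u) s, gF T L η₀ a (fun u => η₁ u) s)
          - cF T r L η₀ a (fun u => η₁ u) f₀ s = _
      unfold cF
      rw [hxs]; ring
    rw [h1, intervalIntegral.integral_eq_sub_of_hasDerivAt
      (fun u _ => expDeriv L η₀ u)
      ((Continuous.intervalIntegrable (by fun_prop) 0 t))]
    rw [xF_of_nonneg ht]
    simp [Real.exp_zero]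

lemma gF_congr {T L η₀ : ℝ} {a a2 w : ℝ → ℝ} (hT : 0 < T)
    (h : a =ᵐ[volume.restrict (Icc (-T) (0:ℝ))] a2) (s : ℝ) :
    gF T L η₀ a w s = gF T L η₀ a2 w s := by
  unfold gF
  rw [intervalIntegral.integral_of_le (by linarith : -T ≤ (0:ℝ)),
    intervalIntegral.integral_of_le (by linarith : -T ≤ (0:ℝ))]
  apply integral_congr_ae
  have h' : a =ᵐ[volume.restrict (Ioc (-T) (0:ℝ))] a2 :=
    ae_mono (Measure.restrict_mono Ioc_subset_Icc_self le_rfl) h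
  filter_upwards [h'] with ξ hξ
  rw [hξ]

lemma cF_congr {T r L η₀ : ℝ} {a a2 w : ℝ → ℝ} {f₀ : ℝ × ℝ → ℝ} (hT : 0 < T)
    (h : a =ᵐ[volume.restrict (Icc (-T) (0:ℝ))] a2) :
    cF T r L η₀ a w f₀ = cF T r L η₀ a2 w f₀ := by
  funext s
  unfold cF
  rw [gF_congr hT h]

end VFLaux

/-- With `Ū₁ = lim_{s→∞} U₁(s)` and `Ū₂ = lim_{s→∞} U₂(s)`,
for every fixed `η₁ ∈ L²([-T,0];ℝ)`, `lim_{η₀→∞} V(η₀,η₁) = (Ū₁ + Ū₂)/ρ`. -/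
theorem value_function_limit_at_infinity
    (T r ρ Cf : ℝ) (hT : 0 < T) (hr : 0 < r) (hρ : 0 < ρ)
    (a : ℝ → ℝ) (ha : AHyp T a)
    (f₀ : ℝ × ℝ → ℝ) (hf : FHyp Cf f₀)
    (U₁ U₂ : ℝ → ℝ) (hU : UHyp ρ Cf U₁ U₂)
    (Ub₁ Ub₂ : ℝ) (hU₁lim : Tendsto U₁ atTop (𝓝 Ub₁))
    (hU₂lim : Tendsto U₂ atTop (𝓝 Ub₂))
    (η₁ : Lp ℝ 2 (μT T)) :
    Tendsto (fun η₀ : ℝ => Vfn T r ρ a f₀ U₁ U₂ (η₀, η₁)) atTop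
      (𝓝 ((Ub₁ + Ub₂) / ρ)) := by
  classical
  open VFLaux in
  -- basic setup
  set L : ℝ := max Cf 0 with hLdef
  have hL0 : 0 ≤ L := le_max_right _ _
  set w : ℝ → ℝ := fun u => η₁ u with hwdef
  have hw_sm : StronglyMeasurable w := Lp.stronglyMeasurable η₁
  have hw_sq : IntegrableOn (fun u => (w u)^2) (Icc (-T) 0) := by
    have h := (Lp.memLp η₁).integrable_sq
    exact h
  haveI hfin : IsFiniteMeasure (μT T) := by
    constructor
    simp only [μT, Measure.restrict_apply_univ]
    exact measure_Icc_lt_top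
  -- measurable representative of the kernel
  obtain ⟨a2, ha2_sm, ha2_ae⟩ : ∃ a2 : ℝ → ℝ, StronglyMeasurable a2 ∧ a =ᵐ[μT T] a2 :=
    ⟨(ha.mem.aestronglyMeasurable).mk a, (ha.mem.aestronglyMeasurable).stronglyMeasurable_mk,
      (ha.mem.aestronglyMeasurable).ae_eq_mk⟩
  have ha2_mem : MemLp a2 2 (μT T) := ha.mem.ae_eq ha2_ae
  have ha2_sq : IntegrableOn (fun ξ => (a2 ξ)^2) (Icc (-T) 0) := by
    simpa only [μT, IntegrableOn] using ha2_mem.integrable_sq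
  have ha2_int : IntegrableOn a2 (Icc (-T) 0) := by
    simpa only [μT, IntegrableOn] using ha2_mem.integrable one_le_two
  have ha2_ae' : a =ᵐ[volume.restrict (Icc (-T) (0:ℝ))] a2 := ha2_ae
  have ha2_nn : ∀ᵐ ξ ∂(volume.restrict (Icc (-T) (0:ℝ))), 0 ≤ a2 ξ := by
    filter_upwards [ha2_ae', ae_restrict_mem measurableSet_Icc] with ξ h1 h2
    rw [← h1]
    exact ha.nonneg ξ h2
  -- the candidate trajectory and control
  have hf₀c : Continuous f₀ := hf.lip.continuous
  set B₁ : ℝ := VFLaux.B1 T a2 w with hB₁def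
  set D : ℝ := f₀ (0, -B₁) with hDdef
  set N : ℝ := max 1 ((1 + |D|) * Real.exp (L * T) / r) with hNdef
  have hN1 : (1:ℝ) ≤ N := le_max_left _ _
  set cf : ℝ → ℝ → ℝ := fun η₀ => VFLaux.cF T r L η₀ a w f₀ with hcfdef
  have hc_eq : ∀ η₀ : ℝ, cf η₀ = VFLaux.cF T r L η₀ a2 w f₀ := fun η₀ =>
    VFLaux.cF_congr hT ha2_ae'
  have hc_sm : ∀ η₀ : ℝ, StronglyMeasurable (cf η₀) := fun η₀ => by
    rw [hc_eq]
    exact VFLaux.cF_sm hT ha2_sm hw_sm hf₀c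
  -- lower bound and nonnegativity of the control
  have hc_ge : ∀ η₀ : ℝ, 0 ≤ η₀ → ∀ s : ℝ, 0 ≤ s →
      r * (η₀ * Real.exp (-(L * s))) + min D 0 ≤ cf η₀ s := by
    intro η₀ hη₀ s hs
    rw [hc_eq]
    exact VFLaux.cF_ge hT hr rfl hη₀ ha2_sm ha2_sq ha2_int ha2_nn hw_sm hw_sq hf hs
  have hc_nn : ∀ η₀ : ℝ, N ≤ η₀ → ∀ s : ℝ, 0 ≤ s → 0 ≤ cf η₀ s := by
    intro η₀ hη₀ s hs
    rw [hc_eq]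
    refine VFLaux.cF_nonneg hT hr rfl (by linarith) ha2_sm ha2_sq ha2_int ha2_nn hw_sm hw_sq hf hs ?_
    exact le_trans (le_max_right _ _) hη₀
  have hc_abs : ∀ η₀ : ℝ, 0 ≤ η₀ → ∀ s : ℝ, 0 ≤ s →
      |cf η₀ s| ≤ (r + L) * η₀ + (|f₀ (0, 0)|
        + L * (η₀ + (B₁ + η₀ * ∫ ξ in Ioc (-T) (0:ℝ), a2 ξ))) := by
    intro η₀ hη₀ s hs
    rw [hc_eq]
    exact VFLaux.cF_abs_le hT hr rfl hη₀ ha2_sm ha2_sq ha2_int ha2_nn hw_sm hw_sq hf hs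
  -- monotonicity and upper bounds of the utilities
  have hU1mono : MonotoneOn U₁ (Ici 0) := by
    apply (strictMonoOn_of_deriv_pos (convex_Ici 0) hU.u1_cont ?_).monotoneOn
    intro x hx
    rw [interior_Ici] at hx
    exact hU.u1_deriv_pos x hx
  have hU1le : ∀ s : ℝ, 0 ≤ s → U₁ s ≤ Ub₁ := by
    intro s hs
    refine ge_of_tendsto hU₁lim ?_
    filter_upwards [eventually_ge_atTop (max s 1)] with t ht
    exact hU1mono hs (le_trans (by positivity) (le_trans (le_max_right s 1) ht))
      (le_trans (le_max_left s 1) ht)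
  have hU2le : ∀ s : ℝ, 0 < s → U₂ s ≤ Ub₂ := by
    intro s hs
    refine ge_of_tendsto hU₂lim ?_
    filter_upwards [eventually_ge_atTop (max s 1)] with t ht
    exact hU.u2_mono hs (lt_of_lt_of_le one_pos (le_trans (le_max_right s 1) ht))
      (le_trans (le_max_left s 1) ht)
  obtain ⟨M₁, hM₁⟩ := hU.u1_bdd
  obtain ⟨M₂, hM₂⟩ := hU.u2_bddAbove
  -- integrability of the comparison function for U₂
  have hU2c : IntegrableOn (fun t => Real.exp (-ρ * t) * U₂ (Real.exp (-(L * t)))) (Ioi 0) := by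
    rcases le_or_gt 0 Cf with hCf | hCf
    · have hLC : L = Cf := max_eq_left hCf
      rw [hLC]
      simpa only [neg_mul] using hU.u2_int
    · have hLC : L = 0 := max_eq_right hCf.le
      rw [hLC]
      simp only [zero_mul, neg_zero, Real.exp_zero]
      exact (exp_neg_integrableOn_Ioi 0 hρ).mul_const (U₂ 1)
  -- state trajectory facts
  set xf : ℝ → ℝ → ℝ := fun η₀ => VFLaux.xF L η₀ w with hxfdef
  have hx_eq : ∀ η₀ : ℝ, ∀ t : ℝ, 0 ≤ t → xf η₀ t = η₀ * Real.exp (-(L * t)) :=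
    fun η₀ t ht => VFLaux.xF_of_nonneg ht
  have hx_pos : ∀ η₀ : ℝ, 0 < η₀ → ∀ t : ℝ, 0 ≤ t → 0 < xf η₀ t := by
    intro η₀ h t ht
    rw [hx_eq η₀ t ht]
    positivity
  -- the bound function for dominated convergence
  set bnd : ℝ → ℝ := fun t => Real.exp (-ρ * t) * (M₁ + |M₂|)
      + |Real.exp (-ρ * t) * U₂ (Real.exp (-(L * t)))| with hbnddef
  have hbnd_int : IntegrableOn bnd (Ioi 0) :=
    ((exp_neg_integrableOn_Ioi 0 hρ).mul_const _).add hU2c.abs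
  -- measurability of the payoff
  have hpay_meas : ∀ η₀ : ℝ, N ≤ η₀ →
      AEStronglyMeasurable (payoff ρ U₁ U₂ (cf η₀) (xf η₀)) (volume.restrict (Ioi 0)) := by
    intro η₀ hη₀
    have hc0 : ∀ t ∈ Ioi (0:ℝ), 0 ≤ cf η₀ t := fun t ht => hc_nn η₀ hη₀ t (le_of_lt ht)
    have hrestr : Continuous fun y : Ici (0:ℝ) => U₁ y :=
      continuousOn_iff_continuous_restrict.1 hU.u1_cont
    have hcm : Measurable fun t => (⟨max (cf η₀ t) 0, mem_Ici.2 (le_max_right _ _)⟩ : Ici (0:ℝ)) :=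
      ((hc_sm η₀).measurable.max measurable_const).subtype_mk
    have hU1m : Measurable fun t => U₁ (max (cf η₀ t) 0) := hrestr.measurable.comp hcm
    have hU2cont : Continuous fun t : ℝ => U₂ (η₀ * Real.exp (-(L * t))) := by
      apply hU.u2_cont.comp_continuous (by fun_prop)
      intro t
      have hη₀pos : (0:ℝ) < η₀ := lt_of_lt_of_le (lt_of_lt_of_le one_pos hN1) hη₀
      exact mem_Ioi.2 (by positivity)
    have hFm : AEStronglyMeasurable
        (fun t => Real.exp (-ρ * t) * (U₁ (max (cf η₀ t) 0) + U₂ (η₀ * Real.exp (-(L * t)))))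
        (volume.restrict (Ioi 0)) :=
      (((Real.continuous_exp.comp (by fun_prop : Continuous fun t : ℝ => -ρ * t)).measurable).mul
        (hU1m.add hU2cont.measurable)).aestronglyMeasurable
    apply hFm.congr
    apply (ae_restrict_iff' measurableSet_Ioi).2
    apply ae_of_all
    intro t ht
    show Real.exp (-ρ * t) * (U₁ (max (cf η₀ t) 0) + U₂ (η₀ * Real.exp (-(L * t))))
        = payoff ρ U₁ U₂ (cf η₀) (xf η₀) t
    unfold payoff
    rw [max_eq_left (hc0 t ht), hx_eq η₀ t (le_of_lt ht)]
  -- the uniform bound on the payoff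
  have hpay_bd : ∀ η₀ : ℝ, N ≤ η₀ → ∀ t ∈ Ioi (0:ℝ),
      ‖payoff ρ U₁ U₂ (cf η₀) (xf η₀) t‖ ≤ bnd t := by
    intro η₀ hη₀ t ht
    have ht' : (0:ℝ) ≤ t := le_of_lt ht
    have hη₀1 : (1:ℝ) ≤ η₀ := le_trans hN1 hη₀
    have hc0 : 0 ≤ cf η₀ t := hc_nn η₀ hη₀ t ht'
    have h1 : |U₁ (cf η₀ t)| ≤ M₁ := hM₁ _ hc0
    have hxpos : 0 < η₀ * Real.exp (-(L * t)) := by positivity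
    have hel : Real.exp (-(L * t)) ≤ η₀ * Real.exp (-(L * t)) := by
      nlinarith [Real.exp_pos (-(L * t))]
    have h2l : U₂ (Real.exp (-(L * t))) ≤ U₂ (η₀ * Real.exp (-(L * t))) :=
      hU.u2_mono (mem_Ioi.2 (Real.exp_pos _)) (mem_Ioi.2 hxpos) hel
    have h2u : U₂ (η₀ * Real.exp (-(L * t))) ≤ M₂ := hM₂ _ hxpos
    have h2 : |U₂ (xf η₀ t)| ≤ |M₂| + |U₂ (Real.exp (-(L * t)))| := by
      rw [hx_eq η₀ t ht', abs_le]
      constructor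
      · nlinarith [neg_abs_le (U₂ (Real.exp (-(L * t)))), abs_nonneg M₂]
      · nlinarith [le_abs_self M₂, abs_nonneg (U₂ (Real.exp (-(L * t))))]
    have h3 : |U₁ (cf η₀ t) + U₂ (xf η₀ t)| ≤ M₁ + (|M₂| + |U₂ (Real.exp (-(L * t)))|) :=
      le_trans (abs_add_le _ _) (by linarith)
    show ‖Real.exp (-ρ * t) * (U₁ (cf η₀ t) + U₂ (xf η₀ t))‖ ≤ bnd t
    rw [Real.norm_eq_abs, abs_mul, abs_of_nonneg (Real.exp_nonneg _), hbnddef]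
    calc Real.exp (-ρ * t) * |U₁ (cf η₀ t) + U₂ (xf η₀ t)|
        ≤ Real.exp (-ρ * t) * (M₁ + (|M₂| + |U₂ (Real.exp (-(L * t)))|)) :=
          mul_le_mul_of_nonneg_left h3 (Real.exp_nonneg _)
      _ = Real.exp (-ρ * t) * (M₁ + |M₂|)
            + Real.exp (-ρ * t) * |U₂ (Real.exp (-(L * t)))| := by ring
      _ ≤ Real.exp (-ρ * t) * (M₁ + |M₂|)
            + |Real.exp (-ρ * t) * U₂ (Real.exp (-(L * t)))| := by
          rw [abs_mul, abs_of_nonneg (Real.exp_nonneg (-ρ * t))]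
  have hpay_int : ∀ η₀ : ℝ, N ≤ η₀ →
      IntegrableOn (payoff ρ U₁ U₂ (cf η₀) (xf η₀)) (Ioi 0) := by
    intro η₀ hη₀
    exact hbnd_int.mono' (hpay_meas η₀ hη₀)
      ((ae_restrict_iff' measurableSet_Ioi).2 (ae_of_all _ (hpay_bd η₀ hη₀)))
  -- the control is admissible
  have hctrl : ∀ η₀ : ℝ, N ≤ η₀ → IsControl (cf η₀) := by
    intro η₀ hη₀
    constructor
    · exact (ae_restrict_iff' measurableSet_Ici).2 (ae_of_all _ fun s hs => hc_nn η₀ hη₀ s hs)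
    · intro x₀ hx₀
      refine ⟨Ici 0 ∩ Icc (x₀ - 1) (x₀ + 1), inter_mem self_mem_nhdsWithin
        (nhdsWithin_le_nhds (Icc_mem_nhds (by linarith) (by linarith))), ?_⟩
      apply Measure.integrableOn_of_bounded (M := (r + L) * η₀ + (|f₀ (0, 0)|
        + L * (η₀ + (B₁ + η₀ * ∫ ξ in Ioc (-T) (0:ℝ), a2 ξ))))
      · exact ((measure_mono inter_subset_right).trans_lt measure_Icc_lt_top).ne
      · exact (hc_sm η₀).aestronglyMeasurable
      · apply (ae_restrict_iff' (measurableSet_Ici.inter measurableSet_Icc)).2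
        apply ae_of_all
        intro s hs
        rw [Real.norm_eq_abs]
        exact hc_abs η₀ (le_trans (le_trans zero_le_one hN1) hη₀) s hs.1
  -- value of the explicit strategy
  set Jv : ℝ → ℝ := fun η₀ => ∫ t in Ioi (0:ℝ), payoff ρ U₁ U₂ (cf η₀) (xf η₀) t with hJvdef
  have hmem : ∀ η₀ : ℝ, N ≤ η₀ → Jv η₀ ∈ Jset T r ρ a f₀ U₁ U₂ (η₀, η₁) := by
    intro η₀ hη₀
    exact ⟨cf η₀, xf η₀, hctrl η₀ hη₀, VFLaux.isSol_xF hT η₁,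
      fun t ht => hx_pos η₀ (lt_of_lt_of_le (lt_of_lt_of_le one_pos hN1) hη₀) t ht,
      hpay_int η₀ hη₀, rfl⟩
  -- the discount integral
  have hIexp : ∫ t in Ioi (0:ℝ), Real.exp (-ρ * t) = 1 / ρ := by
    have hd : ∀ x ∈ Ici (0:ℝ), HasDerivAt (fun t => -Real.exp (-ρ * t) / ρ)
        (Real.exp (-ρ * x)) x := by
      intro x _
      have h1 : HasDerivAt (fun t : ℝ => -ρ * t) (-ρ) x := by
        simpa using (hasDerivAt_id x).const_mul (-ρ)
      have h2 := (h1.exp).fun_neg.div_const ρ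
      exact h2.congr_deriv (by field_simp)
    have hlim : Tendsto (fun t => -Real.exp (-ρ * t) / ρ) atTop (𝓝 0) := by
      have h3 : Tendsto (fun t : ℝ => -ρ * t) atTop atBot :=
        Tendsto.const_mul_atTop_of_neg (neg_neg_iff_pos.2 hρ) tendsto_id
      have h4 := (Real.tendsto_exp_atBot.comp h3).neg.div_const ρ
      simpa using h4
    have := integral_Ioi_of_hasDerivAt_of_tendsto' hd (exp_neg_integrableOn_Ioi 0 hρ) hlim
    rw [this]
    simp [Real.exp_zero]
    ring
  have hconst : ∫ t in Ioi (0:ℝ), Real.exp (-ρ * t) * (Ub₁ + Ub₂) = (Ub₁ + Ub₂) / ρ := by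
    rw [integral_mul_const, hIexp]
    ring
  -- every admissible value is below the candidate limit
  have hub : ∀ η₀ : ℝ, ∀ v ∈ Jset T r ρ a f₀ U₁ U₂ (η₀, η₁), v ≤ (Ub₁ + Ub₂) / ρ := by
    intro η₀ v hv
    obtain ⟨c, x, hctl, hsol, hxpos, hint, hveq⟩ := hv
    rw [hveq]
    have hcnn : ∀ᵐ t ∂(volume.restrict (Ioi (0:ℝ))), 0 ≤ c t :=
      ae_mono (Measure.restrict_mono Ioi_subset_Ici_self le_rfl) hctl.1
    have hle : ∀ᵐ t ∂(volume.restrict (Ioi (0:ℝ))),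
        payoff ρ U₁ U₂ c x t ≤ Real.exp (-ρ * t) * (Ub₁ + Ub₂) := by
      filter_upwards [hcnn, ae_restrict_mem measurableSet_Ioi] with t h1 h2
      have h3 := hU1le (c t) h1
      have h4 := hU2le (x t) (hxpos t (le_of_lt h2))
      show Real.exp (-ρ * t) * (U₁ (c t) + U₂ (x t)) ≤ _
      apply mul_le_mul_of_nonneg_left _ (Real.exp_nonneg _)
      linarith
    calc ∫ t in Ioi (0:ℝ), payoff ρ U₁ U₂ c x t
        ≤ ∫ t in Ioi (0:ℝ), Real.exp (-ρ * t) * (Ub₁ + Ub₂) :=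
          integral_mono_ae hint ((exp_neg_integrableOn_Ioi 0 hρ).mul_const _) hle
      _ = (Ub₁ + Ub₂) / ρ := hconst
  -- sandwiching the value function
  have hJv_le_V : ∀ᶠ η₀ in (atTop : Filter ℝ), Jv η₀ ≤ Vfn T r ρ a f₀ U₁ U₂ (η₀, η₁) := by
    filter_upwards [eventually_ge_atTop N] with η₀ hη₀
    exact le_csSup ⟨(Ub₁ + Ub₂) / ρ, fun v hv => hub η₀ v hv⟩ (hmem η₀ hη₀)
  have hV_le : ∀ᶠ η₀ in (atTop : Filter ℝ), Vfn T r ρ a f₀ U₁ U₂ (η₀, η₁) ≤ (Ub₁ + Ub₂) / ρ := by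
    filter_upwards [eventually_ge_atTop N] with η₀ hη₀
    exact csSup_le ⟨Jv η₀, hmem η₀ hη₀⟩ (fun v hv => hub η₀ v hv)
  -- the explicit strategy converges to the candidate limit
  have hJvlim : Tendsto Jv atTop (𝓝 ((Ub₁ + Ub₂) / ρ)) := by
    rw [← hconst]
    apply tendsto_integral_filter_of_dominated_convergence bnd
    · filter_upwards [eventually_ge_atTop N] with η₀ hη₀
      exact hpay_meas η₀ hη₀
    · filter_upwards [eventually_ge_atTop N] with η₀ hη₀
      exact (ae_restrict_iff' measurableSet_Ioi).2 (ae_of_all _ (hpay_bd η₀ hη₀))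
    · exact hbnd_int
    · apply (ae_restrict_iff' measurableSet_Ioi).2 (ae_of_all _ ?_)
      intro t ht
      have ht' : (0:ℝ) ≤ t := le_of_lt ht
      have hlow : (fun η₀ : ℝ => r * (η₀ * Real.exp (-(L * t))) + min D 0)
          ≤ᶠ[atTop] fun η₀ => cf η₀ t := by
        filter_upwards [eventually_ge_atTop (0:ℝ)] with η₀ hη₀
        exact hc_ge η₀ hη₀ t ht'
      have hcinf : Tendsto (fun η₀ => cf η₀ t) atTop atTop :=
        tendsto_atTop_mono' atTop hlow
          (tendsto_atTop_add_const_right _ (min D 0)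
            ((tendsto_id.atTop_mul_const
              (by positivity : (0:ℝ) < r * Real.exp (-(L * t)))).congr
              (fun η₀ => by simp only [id_eq]; ring)))
      have h2 : Tendsto (fun η₀ => U₁ (cf η₀ t)) atTop (𝓝 Ub₁) := hU₁lim.comp hcinf
      have hxinf : Tendsto (fun η₀ : ℝ => η₀ * Real.exp (-(L * t))) atTop atTop :=
        tendsto_id.atTop_mul_const (Real.exp_pos _)
      have h3 : Tendsto (fun η₀ => U₂ (xf η₀ t)) atTop (𝓝 Ub₂) := by
        apply (hU₂lim.comp hxinf).congr
        intro η₀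
        rw [Function.comp_apply, ← hx_eq η₀ t ht']
      have h5 := (h2.add h3).const_mul (Real.exp (-ρ * t))
      exact h5.congr (fun η₀ => rfl)
  exact tendsto_of_tendsto_of_tendsto_of_le_of_le' hJvlim tendsto_const_nhds hJv_le_V hV_le
end
end

section
/- Characterization of the adjoint of A: an element η = (η₀,η₁) ∈ H belongs to D(A*) — i.e. the linear functional ζ ↦ ⟨Aζ, η⟩ is continuous on (D(A), ‖·‖) — if and only if η₁ ∈ W^{1,2}([-T,0];ℝ) and η₁(-T) = 0; in that case A*η = ( rη₀ + η₁(0), −η₁′ ), i.e. ⟨Aζ, η⟩ = ⟨ζ, (rη₀ + η₁(0), −η₁′)⟩ for all ζ ∈ D(A). -/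
open MeasureTheory Real Set Filter Topology

noncomputable section

/-- The inner product of `H = ℝ × L²([-T,0];ℝ)`. -/
def hinner (T : ℝ) (η ζ : Hsp T) : ℝ := η.1 * ζ.1 + ∫ s, η.2 s * ζ.2 s ∂(μT T)

/-- The (Hilbert) norm of `H = ℝ × L²([-T,0];ℝ)`. -/
def hnorm (T : ℝ) (η : Hsp T) : ℝ := Real.sqrt (η.1 ^ 2 + ‖η.2‖ ^ 2)

/-- The norm `‖η‖₋₁ = ‖A⁻¹η‖`, where `A⁻¹η = (η₀/r, s ↦ η₀/r - ∫_s^0 η₁(ξ)dξ)`. -/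
def nrm1 (T r : ℝ) (η : Hsp T) : ℝ :=
  Real.sqrt ((η.1 / r) ^ 2 + ∫ s, (η.1 / r - ∫ ξ in s..(0:ℝ), η.2 ξ) ^ 2 ∂(μT T))
/-- `(g, g')` is a `W^{1,2}` representative exhibiting membership `ζ ∈ D(A)`:
`g` represents `ζ₁`, has a.e. derivative `g' ∈ L²`, and `g(0) = ζ₀`. -/
instance (T : ℝ) : IsFiniteMeasure (μT T) := by
  constructor
  rw [μT, Measure.restrict_apply_univ, Real.volume_Icc]
  exact ENNReal.ofReal_lt_top

structure DomARep (T : ℝ) (ζ : Hsp T) (g g' : ℝ → ℝ) : Prop where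
  rep : ∀ᵐ s ∂(μT T), ζ.2 s = g s
  mem : MemLp g' 2 (μT T)
  fund : ∀ s ∈ Icc (-T) (0:ℝ), g s = g (-T) + ∫ ξ in (-T)..s, g' ξ
  boundary : g 0 = ζ.1

/-- `(h, h')` is a `W^{1,2}` representative exhibiting membership `ζ ∈ D(A*)`:
`h` represents `ζ₁`, has a.e. derivative `h' ∈ L²`, and `h(-T) = 0`. -/
structure AstarRep (T : ℝ) (ζ : Hsp T) (h h' : ℝ → ℝ) : Prop where
  rep : ∀ᵐ s ∂(μT T), ζ.2 s = h s
  mem : MemLp h' 2 (μT T)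
  fund : ∀ s ∈ Icc (-T) (0:ℝ), h s = h (-T) + ∫ ξ in (-T)..s, h' ξ
  zeroT : h (-T) = 0

namespace Adj

variable {T : ℝ}

/-- primitive (from `-T`) of the truncation of `f` to `[-T,0]`. -/
def primI (T : ℝ) (f : ℝ → ℝ) (s : ℝ) : ℝ :=
  ∫ ξ in (-T)..s, (Icc (-T) (0:ℝ)).indicator f ξ

lemma indicator_integrable {f : ℝ → ℝ} (hf : Integrable f (μT T)) :
    Integrable ((Icc (-T) (0:ℝ)).indicator f) volume :=
  (integrable_indicator_iff measurableSet_Icc).mpr hf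

lemma primI_congr {f g : ℝ → ℝ} (h : f =ᵐ[μT T] g) : primI T f = primI T g := by
  funext s
  apply intervalIntegral.integral_congr_ae
  have h' : ∀ᵐ ξ ∂(volume.restrict (Icc (-T) (0:ℝ))), f ξ = g ξ := h
  rw [ae_restrict_iff' measurableSet_Icc] at h'
  filter_upwards [h'] with ξ hξ _
  by_cases hmem : ξ ∈ Icc (-T) (0:ℝ)
  · rw [Set.indicator_of_mem hmem, Set.indicator_of_mem hmem, hξ hmem]
  · rw [Set.indicator_of_notMem hmem, Set.indicator_of_notMem hmem]

lemma primI_continuous {f : ℝ → ℝ} (hf : Integrable f (μT T)) :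
    Continuous (primI T f) :=
  (indicator_integrable hf).continuous_primitive (-T)

lemma primI_neg_T (f : ℝ → ℝ) : primI T f (-T) = 0 :=
  intervalIntegral.integral_same

lemma primI_bound {f : ℝ → ℝ} (hf : Integrable f (μT T)) (s : ℝ) :
    |primI T f s| ≤ ∫ ξ, |f ξ| ∂(μT T) := by
  have h1 : |primI T f s| ≤ ∫ ξ in Set.uIoc (-T) s, ‖(Icc (-T) (0:ℝ)).indicator f ξ‖ ∂volume :=
    (Real.norm_eq_abs _) ▸ intervalIntegral.norm_integral_le_integral_norm_uIoc
  refine h1.trans ?_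
  have h2 : ∀ ξ, ‖(Icc (-T) (0:ℝ)).indicator f ξ‖ = (Icc (-T) (0:ℝ)).indicator (fun x => |f x|) ξ := by
    intro ξ
    by_cases hmem : ξ ∈ Icc (-T) (0:ℝ)
    · rw [Set.indicator_of_mem hmem, Set.indicator_of_mem hmem, Real.norm_eq_abs]
    · rw [Set.indicator_of_notMem hmem, Set.indicator_of_notMem hmem, norm_zero]
  simp only [h2]
  have h3 : ∫ ξ in Set.uIoc (-T) s, (Icc (-T) (0:ℝ)).indicator (fun x => |f x|) ξ ∂volume
      ≤ ∫ ξ, (Icc (-T) (0:ℝ)).indicator (fun x => |f x|) ξ ∂volume := by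
    apply setIntegral_le_integral ((indicator_integrable hf.abs))
    filter_upwards with ξ using Set.indicator_nonneg (fun x _ => abs_nonneg _) _
  refine h3.trans_eq ?_
  rw [integral_indicator measurableSet_Icc]
  rfl

lemma primI_memℒp (hT : 0 ≤ T) {f : ℝ → ℝ} (hf : Integrable f (μT T)) :
    MemLp (primI T f) 2 (μT T) :=
  MemLp.of_bound (primI_continuous hf).aestronglyMeasurable _
    (Filter.Eventually.of_forall fun s => (Real.norm_eq_abs _) ▸ primI_bound hf s)


lemma primI_eval (hT : 0 ≤ T) {f : ℝ → ℝ} (hf : Integrable f (μT T)) {s : ℝ}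
    (hs : s ∈ Icc (-T) (0:ℝ)) :
    primI T f s = ∫ ξ in Ioc (-T) s, f ξ ∂(μT T) := by
  have hsub : Ioc (-T) s ⊆ Icc (-T) (0:ℝ) := fun x hx => ⟨hx.1.le, hx.2.trans hs.2⟩
  rw [primI, intervalIntegral.integral_of_le hs.1]
  rw [μT, Measure.restrict_restrict measurableSet_Ioc,
    Set.inter_eq_self_of_subset_left hsub]
  apply setIntegral_congr_fun measurableSet_Ioc
  intro x hx
  exact Set.indicator_of_mem (hsub hx) f

lemma primI_zero (hT : 0 ≤ T) {f : ℝ → ℝ} (hf : Integrable f (μT T)) :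
    primI T f 0 = ∫ ξ, f ξ ∂(μT T) := by
  rw [primI_eval hT hf (by constructor <;> linarith : (0:ℝ) ∈ Icc (-T) 0)]
  rw [μT, Measure.restrict_restrict measurableSet_Ioc]
  rw [Set.inter_eq_self_of_subset_left Ioc_subset_Icc_self]
  exact (integral_Icc_eq_integral_Ioc).symm

lemma primI_diff (hT : 0 ≤ T) {f : ℝ → ℝ} (hf : Integrable f (μT T)) {s : ℝ}
    (hs : s ∈ Icc (-T) (0:ℝ)) :
    primI T f 0 - primI T f s = ∫ ξ in Ioc s 0, f ξ ∂(μT T) := by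
  rw [primI_zero hT hf, primI_eval hT hf hs]
  have : ∫ ξ in Ioc (-T) (0:ℝ), f ξ ∂(μT T)
      = (∫ ξ in Ioc (-T) s, f ξ ∂(μT T)) + ∫ ξ in Ioc s 0, f ξ ∂(μT T) := by
    rw [← Ioc_union_Ioc_eq_Ioc hs.1 hs.2, setIntegral_union (Ioc_disjoint_Ioc_of_le le_rfl)
      measurableSet_Ioc hf.integrableOn hf.integrableOn]
  have h0 : ∫ ξ, f ξ ∂(μT T) = ∫ ξ in Ioc (-T) (0:ℝ), f ξ ∂(μT T) := by
    rw [μT, Measure.restrict_restrict measurableSet_Ioc,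
      Set.inter_eq_self_of_subset_left Ioc_subset_Icc_self]
    exact integral_Icc_eq_integral_Ioc
  rw [h0, this]; ring

lemma integral_Ici_eq (hT : 0 ≤ T) {f : ℝ → ℝ} {s : ℝ}
    (hs : s ∈ Icc (-T) (0:ℝ)) :
    ∫ ξ in Ici s, f ξ ∂(μT T) = ∫ ξ in Ioc s 0, f ξ ∂(μT T) := by
  rw [μT, Measure.restrict_restrict measurableSet_Ici,
    Measure.restrict_restrict measurableSet_Ioc]
  have h1 : Ici s ∩ Icc (-T) 0 = Icc s 0 := by
    ext x; simp only [mem_inter_iff, mem_Ici, mem_Icc]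
    constructor
    · rintro ⟨h, _, h'⟩; exact ⟨h, h'⟩
    · rintro ⟨h, h'⟩; exact ⟨h, hs.1.trans h, h'⟩
  have h2 : Ioc s 0 ∩ Icc (-T) (0:ℝ) = Ioc s 0 :=
    Set.inter_eq_self_of_subset_left (fun x hx => ⟨hs.1.trans hx.1.le, hx.2⟩)
  rw [h1, h2, integral_Icc_eq_integral_Ioc]


lemma ae_mem_Icc (T : ℝ) : ∀ᵐ s ∂(μT T), s ∈ Icc (-T) (0:ℝ) :=
  ae_restrict_mem measurableSet_Icc

lemma ae_ne_negT (T : ℝ) : ∀ᵐ s ∂(μT T), s ≠ -T := by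
  have h0 : (μT T) {-T} = 0 := by
    apply le_antisymm _ zero_le
    calc (μT T) {-T} ≤ volume {-T} := Measure.restrict_le_self _
    _ = 0 := Real.volume_singleton
  rw [ae_iff]
  convert h0 using 2
  ext x; simp

lemma key (hT : 0 ≤ T) {φ ψ : ℝ → ℝ} (hφ : Integrable φ (μT T))
    (hψ : Integrable ψ (μT T)) :
    (∫ s, primI T φ s * ψ s ∂(μT T)) + (∫ s, φ s * primI T ψ s ∂(μT T))
      = primI T φ 0 * primI T ψ 0 := by
  set μ := μT T with hμ
  -- step 1 : write the first integral as a double integral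
  have step1 : ∫ s, primI T φ s * ψ s ∂μ
      = ∫ s, (∫ ξ, (Ioc (-T) s).indicator φ ξ * ψ s ∂μ) ∂μ := by
    apply integral_congr_ae
    filter_upwards [ae_mem_Icc T] with s hs
    rw [primI_eval hT hφ hs, ← integral_mul_const, ← integral_indicator measurableSet_Ioc]
    apply integral_congr_ae
    filter_upwards with ξ
    by_cases hmem : ξ ∈ Ioc (-T) s
    · rw [Set.indicator_of_mem hmem, Set.indicator_of_mem hmem]
    · rw [Set.indicator_of_notMem hmem, Set.indicator_of_notMem hmem, zero_mul]
  -- integrability on the product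
  have hS : MeasurableSet {p : ℝ × ℝ | -T < p.2 ∧ p.2 ≤ p.1} := by
    apply MeasurableSet.inter
    · exact measurableSet_lt measurable_const measurable_snd
    · exact measurableSet_le measurable_snd measurable_fst
  have hint : Integrable (fun p : ℝ × ℝ => (Ioc (-T) p.1).indicator φ p.2 * ψ p.1)
      (μ.prod μ) := by
    have h1 : Integrable (fun p : ℝ × ℝ => ψ p.1 * φ p.2) (μ.prod μ) := hψ.mul_prod hφ
    have h2 := h1.indicator hS
    apply h2.congr
    filter_upwards with p
    by_cases hp : p ∈ {p : ℝ × ℝ | -T < p.2 ∧ p.2 ≤ p.1}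
    · rw [Set.indicator_of_mem hp]
      rw [Set.indicator_of_mem (by exact ⟨hp.1, hp.2⟩ : p.2 ∈ Ioc (-T) p.1)]
      ring
    · rw [Set.indicator_of_notMem hp]
      rw [Set.indicator_of_notMem (by simpa [Set.mem_Ioc] using hp : p.2 ∉ Ioc (-T) p.1)]
      ring
  -- step 2 : swap
  have step2 : ∫ s, (∫ ξ, (Ioc (-T) s).indicator φ ξ * ψ s ∂μ) ∂μ
      = ∫ ξ, (∫ s, (Ioc (-T) s).indicator φ ξ * ψ s ∂μ) ∂μ :=
    integral_integral_swap hint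
  -- step 3 : compute the inner integral for a.e. ξ
  have step3 : ∫ ξ, (∫ s, (Ioc (-T) s).indicator φ ξ * ψ s ∂μ) ∂μ
      = ∫ ξ, φ ξ * (primI T ψ 0 - primI T ψ ξ) ∂μ := by
    apply integral_congr_ae
    filter_upwards [ae_mem_Icc T, ae_ne_negT T] with ξ hξ hne
    have hgt : -T < ξ := lt_of_le_of_ne hξ.1 (Ne.symm hne)
    have hfun : (fun s => (Ioc (-T) s).indicator φ ξ * ψ s)
        = fun s => (Ici ξ).indicator (fun s => φ ξ * ψ s) s := by
      funext s
      by_cases hmem : ξ ≤ s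
      · rw [Set.indicator_of_mem (by exact ⟨hgt, hmem⟩ : ξ ∈ Ioc (-T) s),
          Set.indicator_of_mem (by exact hmem : s ∈ Ici ξ)]
      · rw [Set.indicator_of_notMem (by simpa [Set.mem_Ioc] using fun _ => hmem),
          Set.indicator_of_notMem (by simpa using hmem), zero_mul]
    rw [hfun, integral_indicator measurableSet_Ici, MeasureTheory.integral_const_mul,
      integral_Ici_eq hT hξ, ← primI_diff hT hψ hξ]
  rw [step1, step2, step3]
  -- step 4 : algebra
  have hbdd : Integrable (fun ξ => φ ξ * primI T ψ ξ) μ := by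
    have := (hφ.bdd_mul (primI_continuous hψ).aestronglyMeasurable
      (Filter.Eventually.of_forall fun x => (Real.norm_eq_abs _) ▸ primI_bound hψ x))
    apply this.congr
    filter_upwards with x using mul_comm _ _
  have hsplit : ∫ ξ, φ ξ * (primI T ψ 0 - primI T ψ ξ) ∂μ
      = (∫ ξ, φ ξ ∂μ) * primI T ψ 0 - ∫ ξ, φ ξ * primI T ψ ξ ∂μ := by
    rw [← integral_mul_const, ← integral_sub (hφ.mul_const _) hbdd]
    congr 1; funext ξ; ring
  rw [hsplit, primI_zero hT hφ]
  ring


lemma parts (hT : 0 ≤ T) {φ ψ : ℝ → ℝ} (hφ : Integrable φ (μT T))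
    (hψ : Integrable ψ (μT T)) (c d : ℝ) :
    (∫ s, (c + primI T φ s) * ψ s ∂(μT T)) + (∫ s, φ s * (d + primI T ψ s) ∂(μT T))
      = (c + primI T φ 0) * (d + primI T ψ 0) - c * d := by
  have int1 : Integrable (fun s => primI T φ s * ψ s) (μT T) :=
    hψ.bdd_mul (primI_continuous hφ).aestronglyMeasurable
      (Filter.Eventually.of_forall fun x => (Real.norm_eq_abs _) ▸ primI_bound hφ x)
  have int2 : Integrable (fun s => φ s * primI T ψ s) (μT T) := by
    have := hφ.bdd_mul (primI_continuous hψ).aestronglyMeasurable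
      (Filter.Eventually.of_forall fun x => (Real.norm_eq_abs _) ▸ primI_bound hψ x)
    exact this.congr (Filter.Eventually.of_forall fun x => mul_comm _ _)
  have e1 : ∫ s, (c + primI T φ s) * ψ s ∂(μT T)
      = c * (∫ s, ψ s ∂(μT T)) + ∫ s, primI T φ s * ψ s ∂(μT T) := by
    rw [← MeasureTheory.integral_const_mul, ← integral_add (hψ.const_mul c) int1]
    congr 1; funext s; ring
  have e2 : ∫ s, φ s * (d + primI T ψ s) ∂(μT T)
      = d * (∫ s, φ s ∂(μT T)) + ∫ s, φ s * primI T ψ s ∂(μT T) := by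
    rw [← MeasureTheory.integral_const_mul, ← integral_add (hφ.const_mul d) int2]
    congr 1; funext s; ring
  have e3 := key hT hφ hψ
  rw [e1, e2, ← primI_zero hT hφ, ← primI_zero hT hψ]
  nlinarith [e3]

lemma rep_eq (hT : 0 ≤ T) {g g' : ℝ → ℝ}
    (hfund : ∀ s ∈ Icc (-T) (0:ℝ), g s = g (-T) + ∫ ξ in (-T)..s, g' ξ) :
    ∀ s ∈ Icc (-T) (0:ℝ), g s = g (-T) + primI T g' s := by
  intro s hs
  rw [hfund s hs]
  congr 1
  apply intervalIntegral.integral_congr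
  intro x hx
  rw [Set.uIcc_of_le hs.1] at hx
  have hx' : x ∈ Icc (-T) (0:ℝ) := ⟨hx.1, hx.2.trans hs.2⟩
  simp [Set.indicator_of_mem hx']

lemma zero_mem_Icc (hT : 0 ≤ T) : (0:ℝ) ∈ Icc (-T) (0:ℝ) := ⟨by linarith, le_refl _⟩

/-- The adjoint identity (second half of the statement). -/
lemma identity (hT : 0 < T) (r : ℝ) (η : Hsp T) (h h' : ℝ → ℝ)
    (hA : AstarRep T η h h') (ζ : Hsp T) (g g' : ℝ → ℝ) (hD : DomARep T ζ g g') :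
    r * ζ.1 * η.1 + ∫ s, g' s * η.2 s ∂(μT T)
      = ζ.1 * (r * η.1 + h 0) + ∫ s, ζ.2 s * (-(h' s)) ∂(μT T) := by
  have hT' : (0:ℝ) ≤ T := hT.le
  have hg'i : Integrable g' (μT T) := hD.mem.integrable one_le_two
  have hh'i : Integrable h' (μT T) := hA.mem.integrable one_le_two
  have hg := rep_eq hT' hD.fund
  have hh := rep_eq hT' hA.fund
  have e1 : ∫ s, g' s * η.2 s ∂(μT T) = ∫ s, g' s * (0 + primI T h' s) ∂(μT T) := by
    apply integral_congr_ae
    filter_upwards [hA.rep, ae_mem_Icc T] with s h1 h2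
    rw [h1, hh s h2, hA.zeroT]
  have e2 : ∫ s, ζ.2 s * (-(h' s)) ∂(μT T)
      = -∫ s, (g (-T) + primI T g' s) * h' s ∂(μT T) := by
    rw [← integral_neg]
    apply integral_congr_ae
    filter_upwards [hD.rep, ae_mem_Icc T] with s h1 h2
    rw [h1, hg s h2]; ring
  have P := parts hT' hg'i hh'i (g (-T)) 0
  have hb1 : g (-T) + primI T g' 0 = ζ.1 := by
    rw [← hg 0 (zero_mem_Icc hT'), hD.boundary]
  have hb2 : (0:ℝ) + primI T h' 0 = h 0 := by
    have := hh 0 (zero_mem_Icc hT')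
    rw [hA.zeroT] at this
    exact this.symm
  rw [hb1, hb2] at P
  rw [e1, e2]
  nlinarith [P]


lemma inner_eq_integral (F G : Lp ℝ 2 (μT T)) :
    (inner ℝ F G : ℝ) = ∫ s, F s * G s ∂(μT T) := by
  rw [L2.inner_def]
  apply integral_congr_ae
  filter_upwards with s
  simp [RCLike.inner_apply, mul_comm]

lemma cs (F G : Lp ℝ 2 (μT T)) :
    |∫ s, F s * G s ∂(μT T)| ≤ ‖F‖ * ‖G‖ := by
  rw [← inner_eq_integral]
  exact abs_real_inner_le_norm F G

lemma two_dim_cs (a b x y : ℝ) (hy : 0 ≤ y) (hb : 0 ≤ b) :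
    |x| * |a| + y * b ≤ Real.sqrt (a ^ 2 + b ^ 2) * Real.sqrt (x ^ 2 + y ^ 2) := by
  rw [← Real.sqrt_mul (by positivity)]
  rw [show |x| * |a| + y * b = |(|x| * |a| + y * b)| from
    (abs_of_nonneg (by positivity)).symm]
  apply Real.abs_le_sqrt
  have h1 := abs_nonneg a
  have h2 := abs_nonneg x
  nlinarith [sq_nonneg (|a| * y - b * |x|), sq_abs a, sq_abs x]

/-- The backward direction of the iff. -/
lemma backward (hT : 0 < T) (r : ℝ) (η : Hsp T) (h h' : ℝ → ℝ)
    (hA : AstarRep T η h h') :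
    ∃ C : ℝ, ∀ (ζ : Hsp T) (g g' : ℝ → ℝ), DomARep T ζ g g' →
      |r * ζ.1 * η.1 + ∫ s, g' s * η.2 s ∂(μT T)| ≤ C * hnorm T ζ := by
  have hmemneg : MemLp (fun s => -(h' s)) 2 (μT T) := hA.mem.neg
  set wL : Lp ℝ 2 (μT T) := hmemneg.toLp _ with hwL
  refine ⟨Real.sqrt ((r * η.1 + h 0) ^ 2 + ‖wL‖ ^ 2), ?_⟩
  intro ζ g g' hD
  rw [identity hT r η h h' hA ζ g g' hD]
  have e1 : ∫ s, ζ.2 s * (-(h' s)) ∂(μT T) = ∫ s, ζ.2 s * wL s ∂(μT T) := by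
    apply integral_congr_ae
    filter_upwards [hmemneg.coeFn_toLp] with s hs
    rw [hs]
  have e2 := cs ζ.2 wL
  rw [← e1] at e2
  have habs : |ζ.1 * (r * η.1 + h 0) + ∫ s, ζ.2 s * (-(h' s)) ∂(μT T)|
      ≤ |ζ.1| * |r * η.1 + h 0| + ‖ζ.2‖ * ‖wL‖ := by
    calc _ ≤ |ζ.1 * (r * η.1 + h 0)| + |∫ s, ζ.2 s * (-(h' s)) ∂(μT T)| := abs_add_le _ _
    _ ≤ |ζ.1| * |r * η.1 + h 0| + ‖ζ.2‖ * ‖wL‖ := by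
        rw [abs_mul]; exact add_le_add (le_refl _) e2
  refine habs.trans ?_
  unfold hnorm
  exact two_dim_cs (r * η.1 + h 0) ‖wL‖ ζ.1 ‖ζ.2‖ (norm_nonneg _) (norm_nonneg _)


lemma primI_add {f g : ℝ → ℝ} (hf : Integrable f (μT T)) (hg : Integrable g (μT T)) :
    primI T (f + g) = primI T f + primI T g := by
  funext s
  simp only [primI, Pi.add_apply]
  rw [← intervalIntegral.integral_add ((indicator_integrable hf).intervalIntegrable)
    ((indicator_integrable hg).intervalIntegrable)]
  apply intervalIntegral.integral_congr
  intro x _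
  by_cases hmem : x ∈ Icc (-T) (0:ℝ)
  · simp [Set.indicator_of_mem hmem]
  · simp [Set.indicator_of_notMem hmem]

lemma primI_smul (c : ℝ) (f : ℝ → ℝ) :
    primI T (c • f) = c • primI T f := by
  funext s
  simp only [primI, Pi.smul_apply, smul_eq_mul]
  rw [← intervalIntegral.integral_const_mul]
  apply intervalIntegral.integral_congr
  intro x _
  by_cases hmem : x ∈ Icc (-T) (0:ℝ)
  · simp [Set.indicator_of_mem hmem]
  · simp [Set.indicator_of_notMem hmem]

set_option maxHeartbeats 2000000 in
/-- The forward direction of the iff. -/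
lemma forward (hT : 0 < T) (r : ℝ) (η : Hsp T)
    (H : ∃ C : ℝ, ∀ (ζ : Hsp T) (g g' : ℝ → ℝ), DomARep T ζ g g' →
      |r * ζ.1 * η.1 + ∫ s, g' s * η.2 s ∂(μT T)| ≤ C * hnorm T ζ) :
    ∃ h h' : ℝ → ℝ, AstarRep T η h h' := by
  obtain ⟨C, hC⟩ := H
  have hT' : (0:ℝ) ≤ T := hT.le
  -- the Volterra operator on L²
  have hmemV : ∀ F : Lp ℝ 2 (μT T),
      MemLp (fun s => primI T (⇑F) s - primI T (⇑F) 0) 2 (μT T) := fun F =>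
    (primI_memℒp hT' ((Lp.memLp F).integrable one_le_two)).sub
      (memLp_const (primI T (⇑F) 0))
  set V : Lp ℝ 2 (μT T) → Lp ℝ 2 (μT T) := fun F => (hmemV F).toLp _ with hV
  have hVcoe : ∀ F, ⇑(V F) =ᵐ[μT T] fun s => primI T (⇑F) s - primI T (⇑F) 0 :=
    fun F => MemLp.coeFn_toLp _
  set Blin : Lp ℝ 2 (μT T) →ₗ[ℝ] Lp ℝ 2 (μT T) :=
    { toFun := V
      map_add' := by
        intro F G
        apply Lp.ext
        have hFi := (Lp.memLp F).integrable one_le_two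
        have hGi := (Lp.memLp G).integrable one_le_two
        have hP : primI T (⇑(F + G)) = primI T (⇑F + ⇑G) := primI_congr (Lp.coeFn_add F G)
        filter_upwards [hVcoe (F + G), Lp.coeFn_add (V F) (V G), hVcoe F, hVcoe G]
          with s hs1 hs5 hs2 hs3
        rw [hs1, hs5, Pi.add_apply, hs2, hs3, hP, primI_add hFi hGi]
        simp only [Pi.add_apply]
        ring
      map_smul' := by
        intro c F
        apply Lp.ext
        simp only [RingHom.id_apply]
        have hP : primI T (⇑(c • F)) = primI T (c • ⇑F) := primI_congr (Lp.coeFn_smul c F)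
        filter_upwards [hVcoe (c • F), Lp.coeFn_smul c (V F), hVcoe F]
          with s hs1 hs5 hs2
        rw [hs1, hs5, Pi.smul_apply, hs2, hP, primI_smul]
        simp only [Pi.smul_apply, smul_eq_mul]
        ring } with hBlin
  have hBapp : ∀ F, Blin F = V F := fun F => rfl
  -- the continuity bound
  have hbd : ∀ F : Lp ℝ 2 (μT T), |(inner ℝ η.2 F : ℝ)| ≤ C * ‖Blin F‖ := by
    intro F
    have hdom : DomARep T ((0 : ℝ), V F) (fun s => primI T (⇑F) s - primI T (⇑F) 0)
        ((Icc (-T) (0:ℝ)).indicator ⇑F) := by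
      constructor
      · exact hVcoe F
      · exact (Lp.memLp F).indicator measurableSet_Icc
      · intro s _
        show primI T (⇑F) s - primI T (⇑F) 0
          = (primI T (⇑F) (-T) - primI T (⇑F) 0) + primI T (⇑F) s
        rw [primI_neg_T]; ring
      · exact sub_self _
    have := hC ((0 : ℝ), V F) _ _ hdom
    have he1 : r * ((0:ℝ), V F).1 * η.1 = 0 := by simp
    have he2 : ∫ s, (Icc (-T) (0:ℝ)).indicator (⇑F) s * η.2 s ∂(μT T)
        = (inner ℝ η.2 F : ℝ) := by
      rw [inner_eq_integral]
      apply integral_congr_ae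
      filter_upwards [ae_mem_Icc T] with s hs
      rw [Set.indicator_of_mem hs]; ring
    have he3 : hnorm T ((0 : ℝ), V F) = ‖V F‖ := by
      unfold hnorm
      simp [Real.sqrt_sq (norm_nonneg (V F))]
    rw [he1, he2, he3, zero_add] at this
    exact this
  -- the induced functional on the range of Blin
  set fLl : Lp ℝ 2 (μT T) →ₗ[ℝ] ℝ := (innerSL ℝ η.2).toLinearMap with hfLl
  have hker : LinearMap.ker Blin ≤ LinearMap.ker fLl := by
    intro F hF
    rw [LinearMap.mem_ker] at hF ⊢
    have := hbd F
    rw [hF] at this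
    simp only [norm_zero, mul_zero] at this
    have : |(inner ℝ η.2 F : ℝ)| = 0 := le_antisymm this (abs_nonneg _)
    simpa [hfLl] using abs_eq_zero.mp this
  set ℓ : LinearMap.range Blin →ₗ[ℝ] ℝ :=
    ((LinearMap.ker Blin).liftQ fLl hker).comp
      (LinearMap.quotKerEquivRange Blin).symm.toLinearMap with hℓdef
  have hℓ : ∀ F, ℓ ⟨Blin F, LinearMap.mem_range_self Blin F⟩ = (inner ℝ η.2 F : ℝ) := by
    intro F
    have h1 : (LinearMap.quotKerEquivRange Blin).symm ⟨Blin F, LinearMap.mem_range_self Blin F⟩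
        = Submodule.Quotient.mk F := by
      rw [LinearEquiv.symm_apply_eq]
      exact Subtype.ext (Blin.quotKerEquivRange_apply_mk F).symm
    simp only [hℓdef, LinearMap.coe_comp, LinearEquiv.coe_toLinearMap, Function.comp_apply, h1,
      Submodule.liftQ_apply, hfLl, ContinuousLinearMap.coe_coe, innerSL_apply_apply]
  have hbound : ∀ x : LinearMap.range Blin, ‖ℓ x‖ ≤ (max C 0) * ‖x‖ := by
    rintro ⟨x, hx⟩
    obtain ⟨F, rfl⟩ := hx
    have h1 : ℓ ⟨Blin F, LinearMap.mem_range_self Blin F⟩ = (inner ℝ η.2 F : ℝ) := hℓ F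
    rw [h1]
    have h2 : ‖(⟨Blin F, LinearMap.mem_range_self Blin F⟩ : LinearMap.range Blin)‖
        = ‖Blin F‖ := rfl
    rw [Real.norm_eq_abs, h2]
    exact (hbd F).trans (mul_le_mul_of_nonneg_right (le_max_left _ _) (norm_nonneg _))
  set ℓc : LinearMap.range Blin →L[ℝ] ℝ := LinearMap.mkContinuous ℓ (max C 0) hbound with hℓc
  obtain ⟨gext, hgext, -⟩ := exists_extension_norm_eq (LinearMap.range Blin) ℓc
  set w : Lp ℝ 2 (μT T) := (InnerProductSpace.toDual ℝ (Lp ℝ 2 (μT T))).symm gext with hw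
  have hwprop : ∀ F, (inner ℝ w (Blin F) : ℝ) = (inner ℝ η.2 F : ℝ) := by
    intro F
    rw [hw, InnerProductSpace.toDual_symm_apply]
    have := hgext ⟨Blin F, LinearMap.mem_range_self Blin F⟩
    rw [this, hℓc, LinearMap.mkContinuous_apply, hℓ F]
  -- compute the inner product with Blin F via the key lemma
  have hui : Integrable (⇑w) (μT T) := (Lp.memLp w).integrable one_le_two
  have hcomp : ∀ F : Lp ℝ 2 (μT T),
      (inner ℝ w (Blin F) : ℝ) = - ∫ s, (⇑F) s * primI T (⇑w) s ∂(μT T) := by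
    intro F
    have hFi := (Lp.memLp F).integrable one_le_two
    rw [inner_eq_integral]
    have e : ∫ s, (⇑w) s * (⇑(Blin F)) s ∂(μT T)
        = ∫ s, ((primI T (⇑F) s) * (⇑w) s - (primI T (⇑F) 0) * (⇑w) s) ∂(μT T) := by
      apply integral_congr_ae
      filter_upwards [hVcoe F] with s hs
      rw [hBapp F] at *
      rw [hs]; ring
    rw [e]
    have int1 : Integrable (fun s => primI T (⇑F) s * (⇑w) s) (μT T) :=
      hui.bdd_mul (primI_continuous hFi).aestronglyMeasurable
        (Filter.Eventually.of_forall fun x => (Real.norm_eq_abs _) ▸ primI_bound hFi x)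
    have int2 : Integrable (fun s => primI T (⇑F) 0 * (⇑w) s) (μT T) := hui.const_mul _
    rw [integral_sub int1 int2, MeasureTheory.integral_const_mul]
    have hkey := key hT' hFi hui
    have hz := primI_zero hT' hui
    rw [hz] at hkey
    linarith
  -- conclude : η.2 = - toLp (primI w)
  set Gl : Lp ℝ 2 (μT T) := (primI_memℒp hT' hui).toLp _ with hGl
  have hGlcoe : ⇑Gl =ᵐ[μT T] primI T (⇑w) := MemLp.coeFn_toLp _
  have hfinal : ∀ F : Lp ℝ 2 (μT T), (inner ℝ F (η.2 + Gl) : ℝ) = 0 := by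
    intro F
    rw [inner_add_right]
    have h1 : (inner ℝ F η.2 : ℝ) = (inner ℝ η.2 F : ℝ) := real_inner_comm _ _
    have h2 : (inner ℝ F Gl : ℝ) = ∫ s, (⇑F) s * primI T (⇑w) s ∂(μT T) := by
      rw [inner_eq_integral]
      apply integral_congr_ae
      filter_upwards [hGlcoe] with s hs
      rw [hs]
    rw [h1, h2, ← hwprop F, hcomp F]
    ring
  have hzero : η.2 + Gl = 0 := by
    have := hfinal (η.2 + Gl)
    exact inner_self_eq_zero.mp this
  have heq : η.2 = -Gl := eq_neg_of_add_eq_zero_left hzero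
  have hrep : ⇑η.2 =ᵐ[μT T] fun s => -(primI T (⇑w) s) := by
    rw [heq]
    filter_upwards [Lp.coeFn_neg Gl, hGlcoe] with s h1 h2
    rw [h1, Pi.neg_apply, h2]
  refine ⟨fun s => -(primI T (⇑w) s), fun s => -((Icc (-T) (0:ℝ)).indicator (⇑w) s), ?_⟩
  constructor
  · exact hrep
  · exact (((Lp.memLp w).indicator measurableSet_Icc).neg)
  · intro s _
    rw [intervalIntegral.integral_neg]
    show -(primI T (⇑w) s) = -(primI T (⇑w) (-T)) + -(primI T (⇑w) s)
    rw [primI_neg_T]; ring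
  · rw [primI_neg_T]; ring

end Adj

/-- Characterization of the adjoint of `A`: `η ∈ D(A*)`
(i.e. `ζ ↦ ⟨Aζ, η⟩` is continuous on `(D(A), ‖·‖)`) if and only if
`η₁ ∈ W^{1,2}([-T,0];ℝ)` with `η₁(-T) = 0`; in that case
`A*η = (rη₀ + η₁(0), -η₁')`, i.e. `⟨Aζ, η⟩ = ⟨ζ, (rη₀ + η₁(0), -η₁')⟩`
for all `ζ ∈ D(A)`. -/
theorem adjoint_characterization
    (T r : ℝ) (hT : 0 < T) (hr : 0 < r) (η : Hsp T) :
    ((∃ C : ℝ, ∀ (ζ : Hsp T) (g g' : ℝ → ℝ), DomARep T ζ g g' →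
        |r * ζ.1 * η.1 + ∫ s, g' s * η.2 s ∂(μT T)| ≤ C * hnorm T ζ)
      ↔ ∃ h h' : ℝ → ℝ, AstarRep T η h h') ∧
    ∀ h h' : ℝ → ℝ, AstarRep T η h h' →
      ∀ (ζ : Hsp T) (g g' : ℝ → ℝ), DomARep T ζ g g' →
        r * ζ.1 * η.1 + ∫ s, g' s * η.2 s ∂(μT T)
          = ζ.1 * (r * η.1 + h 0) + ∫ s, ζ.2 s * (-(h' s)) ∂(μT T) := by
  constructor
  · constructor
    · exact fun H => Adj.forward hT r η H
    · rintro ⟨h, h', hA⟩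
      exact Adj.backward hT r η h h' hA
  · intro h h' hA ζ g g' hD
    exact Adj.identity hT r η h h' hA ζ g g' hD
end
end

section
/- Let 𝒟 ⊂ H be a nonempty convex set that is open with respect to ‖·‖_{-1}, and let v : 𝒟 → ℝ be concave and continuous with respect to ‖·‖_{-1}. Then for every η ∈ 𝒟, every element of the superdifferential D⁺v(η) belongs to D(A*): if ζ = (ζ₀,ζ₁) ∈ H satisfies v(η′) − v(η) ≤ ⟨η′ − η, ζ⟩ for all η′ ∈ 𝒟, then ζ₁ ∈ W^{1,2}([-T,0];ℝ) and ζ₁(-T) = 0. -/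
open MeasureTheory Real Set Filter Topology

noncomputable section

instance inst_s15 (T : ℝ) : IsFiniteMeasure (μT T) :=
  ⟨by rw [μT, Measure.restrict_apply_univ]; exact measure_Icc_lt_top⟩
lemma μT_ae_Icc (T : ℝ) : ∀ᵐ s ∂(μT T), s ∈ Icc (-T) 0 :=
  ae_restrict_mem measurableSet_Icc
lemma ae_vol_of_ae_μT {T : ℝ} {f g : ℝ → ℝ} (h : f =ᵐ[μT T] g) :
    ∀ᵐ x ∂(volume : Measure ℝ), x ∈ Icc (-T) 0 → f x = g x :=
  (ae_restrict_iff' measurableSet_Icc).1 h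
lemma uIoc_subset_Icc {T s : ℝ} (hs : s ∈ Icc (-T) (0:ℝ)) : uIoc s 0 ⊆ Icc (-T) 0 := by
  rw [uIoc_of_le hs.2]; exact fun x hx => ⟨le_of_lt (lt_of_le_of_lt hs.1 hx.1), hx.2⟩
lemma intI_congr {T : ℝ} {f g : ℝ → ℝ} (h : f =ᵐ[μT T] g) {s : ℝ}
    (hs : s ∈ Icc (-T) (0:ℝ)) : ∫ ξ in s..(0:ℝ), f ξ = ∫ ξ in s..(0:ℝ), g ξ := by
  apply intervalIntegral.integral_congr_ae
  filter_upwards [ae_vol_of_ae_μT h] with x hx hxΙ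
  exact hx (uIoc_subset_Icc hs hxΙ)
lemma nrm1_zero_pair {T r : ℝ} (ψ : Lp ℝ 2 (μT T)) :
    nrm1 T r ((0:ℝ), ψ) = Real.sqrt (∫ s, (∫ ξ in s..(0:ℝ), ψ ξ) ^ 2 ∂(μT T)) := by
  simp [nrm1]
lemma hinner_zero_pair {T : ℝ} (ψ : Lp ℝ 2 (μT T)) (ζ : Hsp T) :
    hinner T ((0:ℝ), ψ) ζ = ∫ s, ψ s * ζ.2 s ∂(μT T) := by
  simp [hinner]

lemma nrm1_neg_pair {T r : ℝ} (ψ : Lp ℝ 2 (μT T)) :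
    nrm1 T r ((0:ℝ), -ψ) = nrm1 T r ((0:ℝ), ψ) := by
  rw [nrm1_zero_pair, nrm1_zero_pair]
  congr 1
  apply integral_congr_ae
  filter_upwards [μT_ae_Icc T] with s hs
  rw [intI_congr (Lp.coeFn_neg ψ) hs]
  simp [intervalIntegral.integral_neg]

lemma hinner_neg_pair {T : ℝ} (ψ : Lp ℝ 2 (μT T)) (ζ : Hsp T) :
    hinner T ((0:ℝ), -ψ) ζ = -hinner T ((0:ℝ), ψ) ζ := by
  rw [hinner_zero_pair, hinner_zero_pair, ← integral_neg]
  apply integral_congr_ae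
  filter_upwards [Lp.coeFn_neg ψ] with s hs
  rw [hs]; simp

lemma nrm1_smul_pair {T r t : ℝ} (ht : 0 ≤ t) (ψ : Lp ℝ 2 (μT T)) :
    nrm1 T r ((0:ℝ), t • ψ) = t * nrm1 T r ((0:ℝ), ψ) := by
  rw [nrm1_zero_pair, nrm1_zero_pair]
  have : (∫ s, (∫ ξ in s..(0:ℝ), (t • ψ) ξ) ^ 2 ∂(μT T))
      = t ^ 2 * ∫ s, (∫ ξ in s..(0:ℝ), ψ ξ) ^ 2 ∂(μT T) := by
    rw [← integral_const_mul]
    apply integral_congr_ae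
    filter_upwards [μT_ae_Icc T] with s hs
    rw [intI_congr (Lp.coeFn_smul t ψ) hs]
    have : ∫ ξ in s..(0:ℝ), (t • (ψ : ℝ → ℝ)) ξ = t * ∫ ξ in s..(0:ℝ), ψ ξ := by
      simp [intervalIntegral.integral_smul, smul_eq_mul]
    rw [this]; ring
  rw [this, Real.sqrt_mul (sq_nonneg t), Real.sqrt_sq ht]

lemma hinner_smul_pair {T : ℝ} (t : ℝ) (ψ : Lp ℝ 2 (μT T)) (ζ : Hsp T) :
    hinner T ((0:ℝ), t • ψ) ζ = t * hinner T ((0:ℝ), ψ) ζ := by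
  rw [hinner_zero_pair, hinner_zero_pair, ← integral_const_mul]
  apply integral_congr_ae
  filter_upwards [Lp.coeFn_smul t ψ] with s hs
  rw [hs]; simp; ring

lemma boundA {T r : ℝ} {𝒟 : Set (Hsp T)} {v : Hsp T → ℝ} {η : Hsp T} (hη : η ∈ 𝒟) {ζ : Hsp T}
    (hopenη : ∃ ε : ℝ, 0 < ε ∧ ∀ η' : Hsp T, nrm1 T r (η' - η) < ε → η' ∈ 𝒟)
    (hcontη : ∃ δ : ℝ, 0 < δ ∧ ∀ η' ∈ 𝒟, nrm1 T r (η' - η) < δ → |v η' - v η| < 1)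
    (hsup : ∀ η' ∈ 𝒟, v η' - v η ≤ hinner T (η' - η) ζ) :
    ∃ C : ℝ, 0 < C ∧ ∀ ψ : Lp ℝ 2 (μT T),
      |∫ s, ψ s * ζ.2 s ∂(μT T)| ≤ C * nrm1 T r ((0:ℝ), ψ) := by
  obtain ⟨ε, hε, hop⟩ := hopenη
  obtain ⟨δ, hδ, hct⟩ := hcontη
  set δ' : ℝ := min ε δ with hδ'def
  have hδ' : 0 < δ' := lt_min hε hδ
  have claim : ∀ ψ : Lp ℝ 2 (μT T), nrm1 T r ((0:ℝ), ψ) < δ' →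
      |∫ s, ψ s * ζ.2 s ∂(μT T)| < 1 := by
    intro ψ hψ
    set ξ : Hsp T := ((0:ℝ), ψ) with hξdef
    have hnegξ : (-ξ) = (((0:ℝ), -ψ) : Hsp T) := by
      simp [hξdef, Prod.ext_iff]
    have hsub1 : (η + ξ) - η = ξ := add_sub_cancel_left η ξ
    have hsub2 : (η - ξ) - η = -ξ := sub_sub_cancel_left η ξ
    have hn1 : nrm1 T r ((η + ξ) - η) < δ' := by rw [hsub1]; exact hψ
    have hn2 : nrm1 T r ((η - ξ) - η) < δ' := by
      rw [hsub2, hnegξ, nrm1_neg_pair]; exact hψ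
    have hmem1 : η + ξ ∈ 𝒟 := hop _ (lt_of_lt_of_le hn1 (min_le_left _ _))
    have hmem2 : η - ξ ∈ 𝒟 := hop _ (lt_of_lt_of_le hn2 (min_le_left _ _))
    have h1 : v (η + ξ) - v η ≤ hinner T ξ ζ := by
      have := hsup _ hmem1; rwa [hsub1] at this
    have h2 : v (η - ξ) - v η ≤ -hinner T ξ ζ := by
      have := hsup _ hmem2
      rwa [hsub2, hnegξ, hinner_neg_pair] at this
    have c1 : |v (η + ξ) - v η| < 1 :=
      hct _ hmem1 (lt_of_lt_of_le hn1 (min_le_right _ _))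
    have c2 : |v (η - ξ) - v η| < 1 :=
      hct _ hmem2 (lt_of_lt_of_le hn2 (min_le_right _ _))
    have := abs_lt.1 c1
    have := abs_lt.1 c2
    rw [← hinner_zero_pair ψ ζ]
    exact abs_lt.2 ⟨by linarith [(abs_lt.1 c1).1], by linarith [(abs_lt.1 c2).1]⟩
  refine ⟨2 / δ', by positivity, ?_⟩
  intro ψ
  have hsmul_int : ∀ t : ℝ, ∫ s, (t • ψ) s * ζ.2 s ∂(μT T)
      = t * ∫ s, ψ s * ζ.2 s ∂(μT T) := by
    intro t
    rw [← hinner_zero_pair, ← hinner_zero_pair, hinner_smul_pair]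
  set N : ℝ := nrm1 T r ((0:ℝ), ψ) with hN
  have hN0 : 0 ≤ N := by rw [hN, nrm1_zero_pair]; exact Real.sqrt_nonneg _
  rcases eq_or_lt_of_le hN0 with h0 | hpos
  · have key : ∀ t : ℝ, 0 < t → t * |∫ s, ψ s * ζ.2 s ∂(μT T)| < 1 := by
      intro t ht
      have := claim (t • ψ) (by rw [nrm1_smul_pair ht.le, ← hN, ← h0, mul_zero]; exact hδ')
      rwa [hsmul_int, abs_mul, abs_of_pos ht] at this
    have hle : |∫ s, ψ s * ζ.2 s ∂(μT T)| ≤ 0 := by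
      by_contra h
      push_neg at h
      have := key (1 / |∫ s, ψ s * ζ.2 s ∂(μT T)|) (by positivity)
      rw [one_div, inv_mul_cancel₀ (ne_of_gt h)] at this
      exact lt_irrefl 1 this
    calc |∫ s, ψ s * ζ.2 s ∂(μT T)| ≤ 0 := hle
      _ ≤ 2 / δ' * N := by rw [← h0, mul_zero]
  · set t : ℝ := δ' / (2 * N) with htdef
    have ht : 0 < t := by positivity
    have htN : t * N = δ' / 2 := by
      rw [htdef]; field_simp
    have := claim (t • ψ) (by
      rw [nrm1_smul_pair ht.le, ← hN, htN]; exact half_lt_self hδ')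
    rw [hsmul_int, abs_mul, abs_of_pos ht] at this
    have h2 : δ' * |∫ s, ψ s * ζ.2 s ∂(μT T)| < 2 * N := by
      rw [htdef, div_mul_eq_mul_div, div_lt_one (by positivity)] at this
      linarith
    rw [div_mul_eq_mul_div, le_div_iff₀ hδ']
    linarith

section V
variable (T : ℝ)

/-- extension by zero outside `[-T,0]`. -/
def tld (f : ℝ → ℝ) : ℝ → ℝ := (Icc (-T) 0).indicator f

lemma integrable_tld (φ : Lp ℝ 2 (μT T)) : Integrable (tld T ⇑φ) volume :=
  (integrable_indicator_iff measurableSet_Icc).2 ((Lp.memLp φ).integrable one_le_two)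

lemma tld_ae {f g : ℝ → ℝ} (h : f =ᵐ[μT T] g) : tld T f =ᵐ[volume] tld T g := by
  filter_upwards [(ae_restrict_iff' measurableSet_Icc).1 h] with x hx
  by_cases hmem : x ∈ Icc (-T) (0:ℝ)
  · simp [tld, indicator_of_mem hmem, hx hmem]
  · simp [tld, indicator_of_notMem hmem]

/-- primitive `s ↦ ∫_s^0` of the zero-extension. -/
def Vfun (f : ℝ → ℝ) (s : ℝ) : ℝ := ∫ ξ in s..(0:ℝ), tld T f ξ

lemma continuous_Vfun (φ : Lp ℝ 2 (μT T)) : Continuous (Vfun T ⇑φ) := by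
  have : Vfun T ⇑φ = fun s => -∫ ξ in (0:ℝ)..s, tld T ⇑φ ξ := by
    funext s; rw [Vfun, intervalIntegral.integral_symm]
  rw [this]
  exact ((integrable_tld T φ).continuous_primitive 0).neg

lemma abs_Vfun_le (φ : Lp ℝ 2 (μT T)) (s : ℝ) :
    |Vfun T ⇑φ s| ≤ ∫ x, |tld T ⇑φ x| := by
  have h1 : ‖∫ ξ in s..(0:ℝ), tld T ⇑φ ξ‖ ≤ ∫ x in uIoc s 0, ‖tld T ⇑φ x‖ :=
    intervalIntegral.norm_integral_le_integral_norm_uIoc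
  refine le_trans h1 ?_
  simp only [Real.norm_eq_abs]
  exact setIntegral_le_integral (integrable_tld T φ).abs (ae_of_all _ fun x => abs_nonneg _)

lemma memℒp_Vfun (φ : Lp ℝ 2 (μT T)) : MemLp (Vfun T ⇑φ) 2 (μT T) :=
  MemLp.of_bound (continuous_Vfun T φ).aestronglyMeasurable _
    (ae_of_all _ fun s => by rw [Real.norm_eq_abs]; exact abs_Vfun_le T φ s)

/-- `V` as a map on `L²`. -/
def VLp (φ : Lp ℝ 2 (μT T)) : Lp ℝ 2 (μT T) := (memℒp_Vfun T φ).toLp _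

lemma Vfun_eq_on_Icc (φ : Lp ℝ 2 (μT T)) {s : ℝ} (hs : s ∈ Icc (-T) (0:ℝ)) :
    Vfun T ⇑φ s = ∫ ξ in s..(0:ℝ), φ ξ := by
  apply intervalIntegral.integral_congr
  intro x hx
  rw [uIcc_of_le hs.2, mem_Icc] at hx
  exact indicator_of_mem (mem_Icc.mpr ⟨hs.1.trans hx.1, hx.2⟩) _

lemma Vfun_add (φ ψ : Lp ℝ 2 (μT T)) :
    Vfun T ⇑(φ + ψ) = Vfun T ⇑φ + Vfun T ⇑ψ := by
  funext s
  have key : tld T ⇑(φ + ψ) =ᵐ[volume] tld T ⇑φ + tld T ⇑ψ := by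
    refine (tld_ae T (Lp.coeFn_add φ ψ)).trans (ae_of_all _ fun x => ?_)
    by_cases hmem : x ∈ Icc (-T) (0:ℝ)
    · simp [tld, indicator_of_mem hmem]
    · simp [tld, indicator_of_notMem hmem]
  have e1 : Vfun T ⇑(φ + ψ) s = ∫ ξ in s..(0:ℝ), (tld T ⇑φ + tld T ⇑ψ) ξ := by
    apply intervalIntegral.integral_congr_ae
    filter_upwards [key] with x hx _
    exact hx
  rw [Pi.add_apply, e1]
  simp only [Pi.add_apply]
  exact intervalIntegral.integral_add (integrable_tld T φ).intervalIntegrable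
    (integrable_tld T ψ).intervalIntegrable

lemma Vfun_smul (t : ℝ) (φ : Lp ℝ 2 (μT T)) :
    Vfun T ⇑(t • φ) = t • Vfun T ⇑φ := by
  funext s
  have key : tld T ⇑(t • φ) =ᵐ[volume] t • tld T ⇑φ := by
    refine (tld_ae T (Lp.coeFn_smul t φ)).trans (ae_of_all _ fun x => ?_)
    by_cases hmem : x ∈ Icc (-T) (0:ℝ)
    · simp [tld, indicator_of_mem hmem]
    · simp [tld, indicator_of_notMem hmem]
  have e1 : Vfun T ⇑(t • φ) s = ∫ ξ in s..(0:ℝ), (t • tld T ⇑φ) ξ := by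
    apply intervalIntegral.integral_congr_ae
    filter_upwards [key] with x hx _
    exact hx
  rw [Pi.smul_apply, e1]
  simp only [Pi.smul_apply, smul_eq_mul]
  rw [intervalIntegral.integral_const_mul]
  rfl

lemma VLp_add (φ ψ : Lp ℝ 2 (μT T)) : VLp T (φ + ψ) = VLp T φ + VLp T ψ := by
  rw [VLp, VLp, VLp, ← MemLp.toLp_add]
  exact MemLp.toLp_congr _ _ (ae_of_all _ fun s => by rw [Vfun_add])

lemma VLp_smul (t : ℝ) (φ : Lp ℝ 2 (μT T)) : VLp T (t • φ) = t • VLp T φ := by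
  rw [VLp, VLp, ← MemLp.toLp_const_smul]
  exact MemLp.toLp_congr _ _ (ae_of_all _ fun s => by rw [Vfun_smul])

/-- `V` as a linear map. -/
def VL : Lp ℝ 2 (μT T) →ₗ[ℝ] Lp ℝ 2 (μT T) where
  toFun := VLp T
  map_add' := VLp_add T
  map_smul' := VLp_smul T

lemma norm_VLp (r : ℝ) (φ : Lp ℝ 2 (μT T)) : ‖VLp T φ‖ = nrm1 T r ((0:ℝ), φ) := by
  have hinner : (inner ℝ (VLp T φ) (VLp T φ) : ℝ) = ∫ s, (∫ ξ in s..(0:ℝ), φ ξ) ^ 2 ∂(μT T) := by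
    rw [L2.inner_def]
    apply integral_congr_ae
    filter_upwards [μT_ae_Icc T, MemLp.coeFn_toLp (memℒp_Vfun T φ)] with s hs hcoe
    rw [RCLike.inner_apply', conj_trivial]
    rw [show (VLp T φ : ℝ → ℝ) s = Vfun T ⇑φ s from hcoe, Vfun_eq_on_Icc T φ hs, sq]
  rw [nrm1_zero_pair, ← hinner, real_inner_self_eq_norm_mul_norm,
    Real.sqrt_mul_self (norm_nonneg _)]

end V

lemma riesz_step (T r : ℝ) (ζ2 : Lp ℝ 2 (μT T)) (C : ℝ)
    (hb : ∀ φ : Lp ℝ 2 (μT T), |∫ s, φ s * ζ2 s ∂(μT T)| ≤ C * nrm1 T r ((0:ℝ), φ)) :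
    ∃ w : Lp ℝ 2 (μT T), ∀ φ : Lp ℝ 2 (μT T),
      ∫ s, φ s * ζ2 s ∂(μT T) = ∫ s, w s * Vfun T ⇑φ s ∂(μT T) := by
  classical
  set L : Lp ℝ 2 (μT T) →L[ℝ] ℝ := innerSL ℝ ζ2 with hLdef
  have hLint : ∀ φ : Lp ℝ 2 (μT T), L φ = ∫ s, φ s * ζ2 s ∂(μT T) := by
    intro φ
    rw [hLdef, innerSL_apply_apply, L2.inner_def]
    apply integral_congr_ae
    filter_upwards with s
    rw [RCLike.inner_apply', conj_trivial, mul_comm]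
  have hb' : ∀ φ, ‖L φ‖ ≤ C * ‖VL T φ‖ := by
    intro φ
    rw [Real.norm_eq_abs, hLint φ]
    calc |∫ s, φ s * ζ2 s ∂(μT T)| ≤ C * nrm1 T r ((0:ℝ), φ) := hb φ
      _ = C * ‖VL T φ‖ := by rw [show ‖VL T φ‖ = ‖VLp T φ‖ from rfl, norm_VLp T r]
  have hle : LinearMap.ker (VL T) ≤ LinearMap.ker (L : Lp ℝ 2 (μT T) →ₗ[ℝ] ℝ) := by
    intro φ hφ
    rw [LinearMap.mem_ker] at hφ ⊢
    have := hb' φ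
    rw [hφ, norm_zero, mul_zero] at this
    simpa using norm_le_zero_iff.1 this
  set Lq := (LinearMap.ker (VL T)).liftQ (L : Lp ℝ 2 (μT T) →ₗ[ℝ] ℝ) hle with hLq
  set e := (VL T).quotKerEquivRange with he
  set f₀ : ↥(LinearMap.range (VL T)) →ₗ[ℝ] ℝ := Lq.comp (e.symm : _ →ₗ[ℝ] _) with hf₀def
  have hf₀ : ∀ φ : Lp ℝ 2 (μT T),
      f₀ ⟨VL T φ, LinearMap.mem_range_self _ φ⟩ = L φ := by
    intro φ
    rw [hf₀def]
    simp only [LinearMap.comp_apply, LinearEquiv.coe_coe]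
    rw [he, LinearMap.quotKerEquivRange_symm_apply_image (VL T) φ]
    rw [hLq, Submodule.mkQ_apply, Submodule.liftQ_apply]
    rfl
  have hf₀b : ∀ x : ↥(LinearMap.range (VL T)), ‖f₀ x‖ ≤ C * ‖x‖ := by
    rintro ⟨x, hx⟩
    obtain ⟨φ, rfl⟩ := hx
    rw [show (⟨VL T φ, ⟨φ, rfl⟩⟩ : ↥(LinearMap.range (VL T)))
        = ⟨VL T φ, LinearMap.mem_range_self _ φ⟩ from rfl, hf₀ φ]
    exact hb' φ
  set F := f₀.mkContinuous C hf₀b with hF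
  obtain ⟨g, hg, -⟩ := exists_extension_norm_eq (LinearMap.range (VL T)) F
  refine ⟨(InnerProductSpace.toDual ℝ (Lp ℝ 2 (μT T))).symm g, fun φ => ?_⟩
  have e1 : ∫ s, φ s * ζ2 s ∂(μT T) = g (VL T φ) := by
    rw [← hLint φ, ← hf₀ φ]
    have := hg ⟨VL T φ, LinearMap.mem_range_self _ φ⟩
    rw [this, hF, LinearMap.mkContinuous_apply]
  rw [e1, ← InnerProductSpace.toDual_symm_apply]
  rw [L2.inner_def]
  apply integral_congr_ae
  filter_upwards [MemLp.coeFn_toLp (memℒp_Vfun T φ)] with s hs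
  rw [RCLike.inner_apply', conj_trivial,
    show ((VL T) φ : Lp ℝ 2 (μT T)) = (memℒp_Vfun T φ).toLp _ from rfl, hs]

/-- The candidate representative `W(ξ) = ∫_{-T}^ξ w`. -/
def Wfun (T : ℝ) (f : ℝ → ℝ) (ξ : ℝ) : ℝ := ∫ s in (-T)..ξ, tld T f s

lemma integrable_Lp (T : ℝ) (w : Lp ℝ 2 (μT T)) : Integrable (⇑w) (μT T) :=
  (Lp.memLp w).integrable one_le_two

lemma claimA (T : ℝ) (φ : Lp ℝ 2 (μT T)) {s : ℝ} (hs : s ∈ Icc (-T) (0:ℝ)) :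
    Vfun T ⇑φ s = ∫ ξ, (Ioc s 0).indicator (⇑φ) ξ ∂(μT T) := by
  rw [integral_indicator measurableSet_Ioc]; unfold μT; rw [
    Measure.restrict_restrict measurableSet_Ioc,
    inter_eq_left.mpr (fun x hx => mem_Icc.mpr ⟨le_of_lt (lt_of_le_of_lt hs.1 (mem_Ioc.mp hx).1), (mem_Ioc.mp hx).2⟩),
    Vfun, intervalIntegral.integral_of_le hs.2]
  apply setIntegral_congr_fun measurableSet_Ioc
  intro x hx
  exact indicator_of_mem (mem_Icc.mpr ⟨le_of_lt (lt_of_le_of_lt hs.1 (mem_Ioc.mp hx).1),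
    (mem_Ioc.mp hx).2⟩) _

lemma claimB (T : ℝ) (hT : 0 < T) (w : Lp ℝ 2 (μT T)) {ξ : ℝ} (hξ : ξ ∈ Icc (-T) (0:ℝ)) :
    Wfun T ⇑w ξ = ∫ s, (Iio ξ).indicator (⇑w) s ∂(μT T) := by
  have hset : Iio ξ ∩ Icc (-T) 0 = Ico (-T) ξ := by
    ext x
    simp only [mem_inter_iff, mem_Iio, mem_Icc, mem_Ico]
    constructor
    · rintro ⟨h1, h2, _⟩; exact ⟨h2, h1⟩
    · rintro ⟨h1, h2⟩; exact ⟨h2, h1, le_of_lt (lt_of_lt_of_le h2 hξ.2)⟩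
  rw [integral_indicator measurableSet_Iio]; unfold μT; rw [
    Measure.restrict_restrict measurableSet_Iio, hset]
  rw [Wfun, intervalIntegral.integral_of_le hξ.1]
  erw [show ∫ s in Ioc (-T) ξ, tld T ⇑w s = ∫ s in Ioc (-T) ξ, w s from
    setIntegral_congr_fun measurableSet_Ioc fun x hx =>
      indicator_of_mem (mem_Icc.mpr ⟨le_of_lt (mem_Ioc.mp hx).1,
        (mem_Ioc.mp hx).2.trans hξ.2⟩) _]
  rw [integral_Ioc_eq_integral_Ioo, integral_Ico_eq_integral_Ioo]; rfl

lemma fubini_step (T : ℝ) (hT : 0 < T) (w φ : Lp ℝ 2 (μT T)) :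
    ∫ s, w s * Vfun T ⇑φ s ∂(μT T) = ∫ ξ, Wfun T ⇑w ξ * φ ξ ∂(μT T) := by
  set S : Set (ℝ × ℝ) := {z : ℝ × ℝ | z.1 < z.2 ∧ z.2 ≤ 0} with hS
  have hSmeas : MeasurableSet S := by
    apply MeasurableSet.inter
    · exact measurableSet_lt measurable_fst measurable_snd
    · exact measurable_snd measurableSet_Iic
  set f : ℝ → ℝ → ℝ := fun s ξ => S.indicator (fun z : ℝ × ℝ => w z.1 * φ z.2) (s, ξ) with hf
  have hint : Integrable (Function.uncurry f) ((μT T).prod (μT T)) := by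
    have base : Integrable (fun z : ℝ × ℝ => w z.1 * φ z.2) ((μT T).prod (μT T)) :=
      (integrable_Lp T w).mul_prod (integrable_Lp T φ)
    have : Function.uncurry f = S.indicator (fun z : ℝ × ℝ => w z.1 * φ z.2) := by
      funext z; rw [Function.uncurry]
    rw [this]
    exact base.indicator hSmeas
  have swap := integral_integral_swap hint
  have lhs : ∫ s, w s * Vfun T ⇑φ s ∂(μT T) = ∫ s, ∫ ξ, f s ξ ∂(μT T) ∂(μT T) := by
    apply integral_congr_ae
    filter_upwards [μT_ae_Icc T] with s hs
    have : ∀ ξ, f s ξ = w s * (Ioc s 0).indicator (⇑φ) ξ := by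
      intro ξ
      by_cases hmem : ξ ∈ Ioc s 0
      · rw [hf]
        have : (s, ξ) ∈ S := ⟨hmem.1, hmem.2⟩
        simp only [indicator_of_mem this, indicator_of_mem hmem]
      · rw [hf]
        have : (s, ξ) ∉ S := fun hc => hmem ⟨hc.1, hc.2⟩
        simp only [indicator_of_notMem this, indicator_of_notMem hmem, mul_zero]
    simp_rw [this]
    rw [integral_const_mul, ← claimA T φ hs]
  have rhs : ∫ ξ, ∫ s, f s ξ ∂(μT T) ∂(μT T) = ∫ ξ, Wfun T ⇑w ξ * φ ξ ∂(μT T) := by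
    apply integral_congr_ae
    filter_upwards [μT_ae_Icc T] with ξ hξ
    have : ∀ s, f s ξ = (Iio ξ).indicator (⇑w) s * φ ξ := by
      intro s
      by_cases hmem : s ∈ Iio ξ
      · rw [hf]
        have : (s, ξ) ∈ S := ⟨hmem, hξ.2⟩
        simp only [indicator_of_mem this, indicator_of_mem hmem]
      · rw [hf]
        have : (s, ξ) ∉ S := fun hc => hmem hc.1
        simp only [indicator_of_notMem this, indicator_of_notMem hmem, zero_mul]
    simp_rw [this]
    rw [integral_mul_const, ← claimB T hT w hξ]
  rw [lhs, swap, rhs]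

lemma continuous_Wfun (T : ℝ) (w : Lp ℝ 2 (μT T)) : Continuous (Wfun T ⇑w) :=
  (integrable_tld T w).continuous_primitive (-T)

lemma memℒp_Wfun (T : ℝ) (w : Lp ℝ 2 (μT T)) : MemLp (Wfun T ⇑w) 2 (μT T) := by
  apply MemLp.of_bound (continuous_Wfun T w).aestronglyMeasurable (∫ x, |tld T ⇑w x|)
  refine ae_of_all _ fun ξ => ?_
  have h1 : ‖∫ s in (-T)..ξ, tld T ⇑w s‖ ≤ ∫ x in uIoc (-T) ξ, ‖tld T ⇑w x‖ :=
    intervalIntegral.norm_integral_le_integral_norm_uIoc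
  refine le_trans h1 ?_
  simp only [Real.norm_eq_abs]
  exact setIntegral_le_integral (integrable_tld T w).abs (ae_of_all _ fun x => abs_nonneg _)

lemma tld_ae_self (T : ℝ) (w : Lp ℝ 2 (μT T)) : tld T ⇑w =ᵐ[μT T] ⇑w := by
  filter_upwards [μT_ae_Icc T] with x hx
  exact indicator_of_mem hx _

lemma final_step (T : ℝ) (ζ : Hsp T) (w : Lp ℝ 2 (μT T))
    (key : ∀ φ : Lp ℝ 2 (μT T),
      ∫ s, φ s * ζ.2 s ∂(μT T) = ∫ ξ, Wfun T ⇑w ξ * φ ξ ∂(μT T)) :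
    AstarRep T ζ (Wfun T ⇑w) (tld T ⇑w) := by
  have hmemW := memℒp_Wfun T w
  set WL : Lp ℝ 2 (μT T) := hmemW.toLp _ with hWL
  have hinner_eq : ∀ φ : Lp ℝ 2 (μT T), (inner ℝ φ ζ.2 : ℝ) = inner ℝ φ WL := by
    intro φ
    rw [L2.inner_def, L2.inner_def]
    have e1 : ∫ s, (inner ℝ (φ s) (ζ.2 s) : ℝ) ∂(μT T) = ∫ s, φ s * ζ.2 s ∂(μT T) := by
      apply integral_congr_ae; filter_upwards with s
      rw [RCLike.inner_apply', conj_trivial]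
    have e2 : ∫ s, (inner ℝ (φ s) (WL s) : ℝ) ∂(μT T) = ∫ ξ, Wfun T ⇑w ξ * φ ξ ∂(μT T) := by
      apply integral_congr_ae
      filter_upwards [hmemW.coeFn_toLp] with s hs
      rw [RCLike.inner_apply', conj_trivial, hs, mul_comm]
    rw [e1, e2, key φ]
  have hzero : ζ.2 = WL := by
    have h0 : (inner ℝ (ζ.2 - WL) (ζ.2 - WL) : ℝ) = 0 := by
      rw [inner_sub_right, hinner_eq (ζ.2 - WL), sub_self]
    rw [← sub_eq_zero]
    exact inner_self_eq_zero.1 h0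
  constructor
  · -- rep
    have : ⇑ζ.2 =ᵐ[μT T] ⇑WL := by rw [hzero]
    filter_upwards [this.trans hmemW.coeFn_toLp] with s hs using hs
  · -- mem
    exact (Lp.memLp w).ae_eq (tld_ae_self T w).symm
  · -- fund
    intro s _
    rw [show Wfun T ⇑w (-T) = 0 from intervalIntegral.integral_same, zero_add]
    rfl
  · exact intervalIntegral.integral_same

/-- Let `𝒟 ⊆ H` be nonempty, convex and open for `‖·‖₋₁`, and
let `v : 𝒟 → ℝ` be concave and `‖·‖₋₁`-continuous. Then every element of the
superdifferential `D⁺v(η)`, `η ∈ 𝒟`, belongs to `D(A*)`: its second component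
has a `W^{1,2}` representative vanishing at `-T`. -/
theorem superdifferential_subset_domain_adjoint
    (T r : ℝ) (hT : 0 < T) (hr : 0 < r)
    (𝒟 : Set (Hsp T)) (hne : 𝒟.Nonempty) (hconv : Convex ℝ 𝒟)
    (hopen : ∀ η ∈ 𝒟, ∃ ε : ℝ, 0 < ε ∧ ∀ η' : Hsp T, nrm1 T r (η' - η) < ε → η' ∈ 𝒟)
    (v : Hsp T → ℝ) (hconc : ConcaveOn ℝ 𝒟 v)
    (hcont : ∀ η ∈ 𝒟, ∀ ε : ℝ, 0 < ε → ∃ δ : ℝ, 0 < δ ∧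
      ∀ η' ∈ 𝒟, nrm1 T r (η' - η) < δ → |v η' - v η| < ε) :
    ∀ η ∈ 𝒟, ∀ ζ : Hsp T,
      (∀ η' ∈ 𝒟, v η' - v η ≤ hinner T (η' - η) ζ) →
      ∃ h h' : ℝ → ℝ, AstarRep T ζ h h' := by
  intro η hη ζ hsup
  obtain ⟨C, hC, hb⟩ := boundA hη (hopen η hη) (hcont η hη 1 one_pos) hsup
  obtain ⟨w, hw⟩ := riesz_step T r ζ.2 C hb
  exact ⟨Wfun T ⇑w, tld T ⇑w, final_step T ζ w (fun φ => (hw φ).trans (fubini_step T hT w φ))⟩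
end
end
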